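/- arXiv:1101.4439 — 7 statements merged into one kernel-verified Lean document; each statement's English description precedes it below -/
import Mathlib

section
/- Let x₁,…,x_m ∈ X be pairwise distinct and suppose the matrix K[x] is invertible and ‖K[x]^{-1} K_x(x)‖₁ ≤ 1 for all x ∈ X. Then for every c ∈ ℝ^m, sup_{x∈X} |Σ_{j=1}^m c_j K(x,x_j)| = ‖c^T K[x]‖_∞, i.e., the supremum over X of |Σ_j c_j K(x,x_j)| equals max_{k=1,…,m} |Σ_{j=1}^m c_j K(x_k,x_j)|. -/
open MeasureTheory Matrix

/-- let `x₁,…,x_m` be pairwise distinct, `K[x]` (with entries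
`(K[x])_{j,k} = K(x_k,x_j)`) invertible, and `‖K[x]⁻¹ K_x(x)‖₁ ≤ 1` for all `x ∈ X`.
Then for every `c ∈ ℝ^m`, `sup_{x∈X} |Σ_j c_j K(x,x_j)| = ‖c^T K[x]‖_∞`.
Here `K x : C₀(X,ℝ)` is the function `t ↦ K(t,x)`, so the left-hand side is the
`C₀`-norm of `Σ_j c_j K(·,x_j)` and `(c^T K[x])_k = Σ_j c_j K(x_k,x_j)`. -/
theorem stmt3 {X : Type*} [TopologicalSpace X] [LocallyCompactSpace X] [T2Space X]
    (K : X → ZeroAtInftyContinuousMap X ℝ)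
    (m : ℕ) (hm : 0 < m) (xs : Fin m → X) (hxs : Function.Injective xs)
    (Kmat : Matrix (Fin m) (Fin m) ℝ)
    (hKmat : ∀ j k, Kmat j k = (K (xs j)) (xs k))
    (hinv : IsUnit Kmat.det)
    (hH2 : ∀ x : X, ∑ j, |(Kmat⁻¹ *ᵥ fun j => (K (xs j)) x) j| ≤ 1)
    (c : Fin m → ℝ) :
    ‖∑ j, c j • K (xs j)‖ = ⨆ k : Fin m, |∑ j, c j * Kmat j k| := by
  have hne : Nonempty (Fin m) := ⟨⟨0, hm⟩⟩
  set f : ZeroAtInftyContinuousMap X ℝ := ∑ j, c j • K (xs j) with hf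
  have hfx : ∀ x : X, f x = ∑ j, c j * (K (xs j)) x := by
    intro x
    rw [hf]
    induction (Finset.univ : Finset (Fin m)) using Finset.induction with
    | empty => simp
    | insert _ _ h ih =>
      rw [Finset.sum_insert h, Finset.sum_insert h, ZeroAtInftyContinuousMap.coe_add]
      simp [ZeroAtInftyContinuousMap.coe_smul, ih]
  have hbdd : BddAbove (Set.range fun k : Fin m => |∑ j, c j * Kmat j k|) :=
    Set.Finite.bddAbove (Set.finite_range _)
  set M := ⨆ k : Fin m, |∑ j, c j * Kmat j k| with hM
  have hM0 : 0 ≤ M := le_trans (abs_nonneg _) (le_ciSup hbdd ⟨0, hm⟩)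
  apply le_antisymm
  · rw [← ZeroAtInftyContinuousMap.norm_toBCF_eq_norm]
    apply (BoundedContinuousFunction.norm_le hM0).mpr
    intro x
    have hfxM : |f x| ≤ M := by
      set a : Fin m → ℝ := Kmat⁻¹ *ᵥ (fun j => (K (xs j)) x) with ha
      have hv : Kmat *ᵥ a = fun j => (K (xs j)) x := by
        rw [ha, Matrix.mulVec_mulVec, Matrix.mul_nonsing_inv _ hinv, Matrix.one_mulVec]
      have hfeq : f x = ∑ k, (∑ j, c j * Kmat j k) * a k := by
        rw [hfx x]
        have : ∀ j, (K (xs j)) x = ∑ k, Kmat j k * a k := by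
          intro j
          have := congrFun hv j
          simpa [Matrix.mulVec, dotProduct] using this.symm
        simp_rw [this, Finset.mul_sum, Finset.sum_mul]
        rw [Finset.sum_comm]
        ring_nf
      rw [hfeq]
      calc |∑ k, (∑ j, c j * Kmat j k) * a k| ≤ ∑ k, |(∑ j, c j * Kmat j k) * a k| :=
            Finset.abs_sum_le_sum_abs _ _
        _ ≤ ∑ k, M * |a k| := by
            apply Finset.sum_le_sum
            intro k _
            rw [abs_mul]
            exact mul_le_mul_of_nonneg_right (le_ciSup hbdd k) (abs_nonneg _)
        _ = M * ∑ k, |a k| := by rw [Finset.mul_sum]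
        _ ≤ M * 1 := mul_le_mul_of_nonneg_left (hH2 x) hM0
        _ = M := mul_one M
    simpa using hfxM
  · apply ciSup_le
    intro k
    have : |∑ j, c j * Kmat j k| = |f (xs k)| := by
      rw [hfx]
      congr 1
      exact Finset.sum_congr rfl fun j _ => by rw [hKmat]
    rw [this, ← Real.norm_eq_abs, ← ZeroAtInftyContinuousMap.norm_toBCF_eq_norm]
    exact BoundedContinuousFunction.norm_coe_le_norm f.toBCF (xs k)
end

section
/- Suppose K(·,x) ∈ C₀(X) for every x ∈ X and span{K(·,x) : x ∈ X} is dense in C₀(X). Let x₁,…,x_m ∈ X be pairwise distinct, suppose K[x] is invertible and ‖K[x]^{-1} K_x(x)‖₁ ≤ 1 for all x ∈ X. Let y ∈ ℝ^m and set c₀ := K[x]^{-1} y. Then: (i) every μ ∈ M(X) satisfying the interpolation conditions f_μ(x_j) = y_j for all j = 1,…,m has total variation ‖μ‖ ≥ ‖c₀‖₁; (ii) the discrete measure μ₀ := Σ_{j=1}^m (c₀)_j δ_{x_j} interpolates, f_{μ₀}(x_j) = y_j for all j, and has ‖μ₀‖ = ‖c₀‖₁. Hence μ₀ is a minimizer of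 the minimal norm interpolation problem inf{‖μ‖ : μ ∈ M(X), f_μ(x_j) = y_j for all j}. -/
open MeasureTheory Matrix

/-- The integral of a function against a finite signed Borel measure,
defined via the Jordan decomposition. -/
noncomputable def sintegral {X : Type*} [MeasurableSpace X]
    (μ : SignedMeasure X) (f : X → ℝ) : ℝ :=
  (∫ t, f t ∂μ.toJordanDecomposition.posPart) - ∫ t, f t ∂μ.toJordanDecomposition.negPart

/-- The total variation norm of a finite signed Borel measure. -/
noncomputable def tvNorm {X : Type*} [MeasurableSpace X] (μ : SignedMeasure X) : ℝ :=
  (μ.totalVariation Set.univ).toReal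

/-- The Dirac measure at a point, as a signed measure. -/
noncomputable def diracSM {X : Type*} [MeasurableSpace X] (x : X) : SignedMeasure X :=
  (Measure.dirac x).toSignedMeasure

open scoped BoundedContinuousFunction NNReal ENNReal
section Helpers

variable {X : Type*} [MeasurableSpace X]

lemma my_isFiniteMeasure_finsum {ι : Type*} (s : Finset ι) (μ : ι → Measure X)
    [h : ∀ i, IsFiniteMeasure (μ i)] : IsFiniteMeasure (∑ i ∈ s, μ i) := by
  classical
  induction s using Finset.induction with
  | empty => simpa using inferInstanceAs (IsFiniteMeasure (0 : Measure X))
  | @insert _ _ hns ih =>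
    rw [Finset.sum_insert hns]
    haveI := ih
    infer_instance

lemma my_toSM_finsum {ι : Type*} (s : Finset ι) (μ : ι → Measure X)
    [h : ∀ i, IsFiniteMeasure (μ i)] :
    (∑ i ∈ s, μ i).toSignedMeasure = ∑ i ∈ s, (μ i).toSignedMeasure := by
  haveI := my_isFiniteMeasure_finsum s μ
  ext t ht
  have hR : (∑ i ∈ s, (μ i).toSignedMeasure) t = ∑ i ∈ s, ((μ i).toSignedMeasure) t := by
    rw [← VectorMeasure.coeFnAddMonoidHom_apply, map_sum]
    simp [Finset.sum_apply]
  rw [Measure.toSignedMeasure_apply_measurable ht, hR, measureReal_def, Measure.finset_sum_apply,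
    ENNReal.toReal_sum (fun i _ => measure_ne_top _ _)]
  exact Finset.sum_congr rfl fun i _ =>
    (Measure.toSignedMeasure_apply_measurable ht).symm

lemma my_sintegral_repr [TopologicalSpace X] [OpensMeasurableSpace X]
    {μ : SignedMeasure X} {P N : Measure X} [IsFiniteMeasure P] [IsFiniteMeasure N]
    (h : μ = P.toSignedMeasure - N.toSignedMeasure) (f : X →ᵇ ℝ) :
    sintegral μ f = (∫ t, f t ∂P) - ∫ t, f t ∂N := by
  have hJ : μ.toJordanDecomposition.posPart.toSignedMeasure
      - μ.toJordanDecomposition.negPart.toSignedMeasure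
      = P.toSignedMeasure - N.toSignedMeasure := by
    rw [← h]; exact μ.toSignedMeasure_toJordanDecomposition
  have key : μ.toJordanDecomposition.posPart + N = P + μ.toJordanDecomposition.negPart := by
    apply Measure.toSignedMeasure_eq_toSignedMeasure_iff.mp
    rw [Measure.toSignedMeasure_add, Measure.toSignedMeasure_add]
    exact sub_eq_sub_iff_add_eq_add.mp hJ
  have hint : (∫ t, f t ∂(μ.toJordanDecomposition.posPart + N))
      = ∫ t, f t ∂(P + μ.toJordanDecomposition.negPart) := by rw [key]
  rw [integral_add_measure (f.integrable _) (f.integrable _),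
      integral_add_measure (f.integrable _) (f.integrable _)] at hint
  rw [sintegral]
  linarith

lemma my_tv_le {μ : SignedMeasure X} {P N : Measure X} [IsFiniteMeasure P] [IsFiniteMeasure N]
    (h : μ = P.toSignedMeasure - N.toSignedMeasure) :
    tvNorm μ ≤ (P Set.univ).toReal + (N Set.univ).toReal := by
  have hJ : μ.toJordanDecomposition.posPart.toSignedMeasure
      - μ.toJordanDecomposition.negPart.toSignedMeasure
      = P.toSignedMeasure - N.toSignedMeasure := by
    rw [← h]; exact μ.toSignedMeasure_toJordanDecomposition
  have key : μ.toJordanDecomposition.posPart + N = P + μ.toJordanDecomposition.negPart := by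
    apply Measure.toSignedMeasure_eq_toSignedMeasure_iff.mp
    rw [Measure.toSignedMeasure_add, Measure.toSignedMeasure_add]
    exact sub_eq_sub_iff_add_eq_add.mp hJ
  set pos := μ.toJordanDecomposition.posPart
  set neg := μ.toJordanDecomposition.negPart
  obtain ⟨S, hSm, hS1, hS2⟩ := μ.toJordanDecomposition.mutuallySingular
  have keyS : pos S + N S = P S + neg S := by
    have := congrArg (fun m : Measure X => m S) key
    simpa [Measure.add_apply] using this
  have keySc : pos Sᶜ + N Sᶜ = P Sᶜ + neg Sᶜ := by
    have := congrArg (fun m : Measure X => m Sᶜ) key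
    simpa [Measure.add_apply] using this
  have hposle : pos Set.univ ≤ P Set.univ := by
    calc pos Set.univ = pos S + pos Sᶜ := (measure_add_measure_compl hSm).symm
    _ = pos Sᶜ := by rw [hS1, zero_add]
    _ ≤ pos Sᶜ + N Sᶜ := le_self_add
    _ = P Sᶜ + neg Sᶜ := keySc
    _ = P Sᶜ := by rw [hS2, add_zero]
    _ ≤ P Set.univ := measure_mono (Set.subset_univ _)
  have hnegle : neg Set.univ ≤ N Set.univ := by
    calc neg Set.univ = neg S + neg Sᶜ := (measure_add_measure_compl hSm).symm
    _ = neg S := by rw [hS2, add_zero]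
    _ ≤ P S + neg S := le_add_self
    _ = pos S + N S := keyS.symm
    _ = N S := by rw [hS1, zero_add]
    _ ≤ N Set.univ := measure_mono (Set.subset_univ _)
  rw [tvNorm, SignedMeasure.totalVariation, Measure.add_apply,
      ENNReal.toReal_add (measure_ne_top _ _) (measure_ne_top _ _)]
  gcongr
  · exact measure_ne_top _ _
  · exact measure_ne_top _ _

lemma my_tvNorm_eq (μ : SignedMeasure X) :
    tvNorm μ = (μ.toJordanDecomposition.posPart Set.univ).toReal
      + (μ.toJordanDecomposition.negPart Set.univ).toReal := by
  rw [tvNorm, SignedMeasure.totalVariation, Measure.add_apply,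
      ENNReal.toReal_add (measure_ne_top _ _) (measure_ne_top _ _)]

end Helpers

/-- under density of `span{K(·,x)}` in `C₀(X)`, invertibility of `K[x]`
(entries `(K[x])_{j,k} = K(x_k,x_j)`) and the condition `‖K[x]⁻¹ K_x(x)‖₁ ≤ 1` for all `x`,
with `c₀ := K[x]⁻¹ y`: (i) every regular `μ ∈ M(X)` with `f_μ(x_j) = y_j` for all `j` has
`‖μ‖ ≥ ‖c₀‖₁`; (ii) `μ₀ := Σ_j (c₀)_j δ_{x_j}` interpolates and `‖μ₀‖ = ‖c₀‖₁`.
Hence `μ₀` minimizes the minimal norm interpolation problem.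
Here `K x : C₀(X,ℝ)` is `t ↦ K(t,x)`, so `f_μ(x_j) = sintegral μ (K (xs j))`. -/
theorem stmt4 {X : Type*} [TopologicalSpace X] [LocallyCompactSpace X] [T2Space X]
    [MeasurableSpace X] [BorelSpace X]
    (K : X → ZeroAtInftyContinuousMap X ℝ)
    (hdense : Dense (↑(Submodule.span ℝ (Set.range K)) :
      Set (ZeroAtInftyContinuousMap X ℝ)))
    (m : ℕ) (xs : Fin m → X) (hxs : Function.Injective xs)
    (Kmat : Matrix (Fin m) (Fin m) ℝ)
    (hKmat : ∀ j k, Kmat j k = (K (xs j)) (xs k))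
    (hinv : IsUnit Kmat.det)
    (hH2 : ∀ x : X, ∑ j, |(Kmat⁻¹ *ᵥ fun j => (K (xs j)) x) j| ≤ 1)
    (y : Fin m → ℝ) :
    (∀ μ : SignedMeasure X, μ.totalVariation.Regular →
      (∀ j, sintegral μ (K (xs j)) = y j) →
      ∑ j, |(Kmat⁻¹ *ᵥ y) j| ≤ tvNorm μ) ∧
    (∀ j, sintegral (∑ k, (Kmat⁻¹ *ᵥ y) k • diracSM (xs k)) (K (xs j)) = y j) ∧
    tvNorm (∑ k, (Kmat⁻¹ *ᵥ y) k • diracSM (xs k)) = ∑ j, |(Kmat⁻¹ *ᵥ y) j| := by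
  classical
  set c : Fin m → ℝ := Kmat⁻¹ *ᵥ y with hc
  have hcoe : ∀ x : X, ⇑(K x).toBCF = ⇑(K x) := fun x => rfl
  have hintg : ∀ (ν : Measure X) [IsFiniteMeasure ν] (x : X),
      Integrable (fun t => (K x) t) ν := by
    intro ν _ x
    have := ((K x).toBCF).integrable ν
    simpa [hcoe] using this
  -- Claim 1 : lower bound for any interpolating signed measure
  have claim1 : ∀ μ : SignedMeasure X, (∀ j, sintegral μ (K (xs j)) = y j) →
      ∑ j, |c j| ≤ tvNorm μ := by
    intro μ hI
    set pos := μ.toJordanDecomposition.posPart with hposdef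
    set neg := μ.toJordanDecomposition.negPart with hnegdef
    set ε : Fin m → ℝ := fun j => if 0 ≤ c j then 1 else -1 with hε
    set a : Fin m → ℝ := ε ᵥ* Kmat⁻¹ with ha
    set h : X → ℝ := fun x => ∑ j, a j * (K (xs j)) x with hh
    have habs : ∀ j, |c j| = ε j * c j := by
      intro j
      by_cases hj : 0 ≤ c j
      · simp [hε, hj, abs_of_nonneg hj]
      · simp [hε, hj, abs_of_neg (lt_of_not_ge hj)]
    have h1 : ∑ j, |c j| = ∑ j, a j * y j := by
      calc ∑ j, |c j| = ∑ j, ε j * c j := Finset.sum_congr rfl fun j _ => habs j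
      _ = ε ⬝ᵥ (Kmat⁻¹ *ᵥ y) := rfl
      _ = (ε ᵥ* Kmat⁻¹) ⬝ᵥ y := Matrix.dotProduct_mulVec ε Kmat⁻¹ y
      _ = ∑ j, a j * y j := rfl
    have hbound : ∀ x, |h x| ≤ 1 := by
      intro x
      have hx : h x = ∑ j, ε j * (Kmat⁻¹ *ᵥ fun j => (K (xs j)) x) j := by
        have hx0 : h x = (ε ᵥ* Kmat⁻¹) ⬝ᵥ (fun j => (K (xs j)) x) := rfl
        rw [hx0, ← Matrix.dotProduct_mulVec]
        rfl
      rw [hx]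
      calc |∑ j, ε j * (Kmat⁻¹ *ᵥ fun j => (K (xs j)) x) j|
          ≤ ∑ j, |ε j * (Kmat⁻¹ *ᵥ fun j => (K (xs j)) x) j| :=
            Finset.abs_sum_le_sum_abs _ _
      _ ≤ ∑ j, |(Kmat⁻¹ *ᵥ fun j => (K (xs j)) x) j| := by
            refine Finset.sum_le_sum fun j _ => ?_
            rw [abs_mul]
            have he1 : |ε j| = 1 := by by_cases hj : 0 ≤ c j <;> simp [hε, hj]
            rw [he1, one_mul]
      _ ≤ 1 := hH2 x
    have hInth : ∀ (ν : Measure X) [IsFiniteMeasure ν], Integrable h ν := by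
      intro ν _
      exact integrable_finset_sum _ fun j _ => (hintg ν (xs j)).const_mul (a j)
    have h2 : ∑ j, a j * sintegral μ (K (xs j)) = (∫ x, h x ∂pos) - ∫ x, h x ∂neg := by
      have e1 : ∫ x, h x ∂pos = ∑ j, a j * ∫ x, (K (xs j)) x ∂pos := by
        rw [hh, integral_finset_sum _ fun j _ => (hintg pos (xs j)).const_mul (a j)]
        exact Finset.sum_congr rfl fun j _ => integral_const_mul _ _
      have e2 : ∫ x, h x ∂neg = ∑ j, a j * ∫ x, (K (xs j)) x ∂neg := by
        rw [hh, integral_finset_sum _ fun j _ => (hintg neg (xs j)).const_mul (a j)]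
        exact Finset.sum_congr rfl fun j _ => integral_const_mul _ _
      rw [e1, e2, ← Finset.sum_sub_distrib]
      refine Finset.sum_congr rfl fun j _ => ?_
      simp only [sintegral, ← hposdef, ← hnegdef]
      ring
    have hb1 : ∫ x, h x ∂pos ≤ (pos Set.univ).toReal := by
      calc ∫ x, h x ∂pos ≤ ∫ _, (1 : ℝ) ∂pos :=
        integral_mono (hInth pos) (integrable_const 1) fun x => (abs_le.mp (hbound x)).2
      _ = (pos Set.univ).toReal := by simp; rfl
    have hb2 : -∫ x, h x ∂neg ≤ (neg Set.univ).toReal := by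
      rw [← integral_neg]
      calc ∫ x, -h x ∂neg ≤ ∫ _, (1 : ℝ) ∂neg := by
            refine integral_mono (hInth neg).neg (integrable_const 1) fun x => ?_
            have := (abs_le.mp (hbound x)).1
            simp only [Pi.neg_apply]
            linarith
      _ = (neg Set.univ).toReal := by simp; rfl
    have h3 : ∑ j, |c j| = (∫ x, h x ∂pos) - ∫ x, h x ∂neg := by
      rw [h1, ← h2]
      exact Finset.sum_congr rfl fun j _ => by rw [hI j]
    rw [h3, my_tvNorm_eq μ, ← hposdef, ← hnegdef]
    linarith
  -- the discrete measure
  haveI hPf : IsFiniteMeasure (∑ k, ((c k).toNNReal • Measure.dirac (xs k) : Measure X)) :=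
    my_isFiniteMeasure_finsum _ _
  haveI hNf : IsFiniteMeasure (∑ k, ((-(c k)).toNNReal • Measure.dirac (xs k) : Measure X)) :=
    my_isFiniteMeasure_finsum _ _
  have hrep : (∑ k, c k • diracSM (xs k))
      = (∑ k, ((c k).toNNReal • Measure.dirac (xs k) : Measure X)).toSignedMeasure
      - (∑ k, ((-(c k)).toNNReal • Measure.dirac (xs k) : Measure X)).toSignedMeasure := by
    rw [my_toSM_finsum, my_toSM_finsum, ← Finset.sum_sub_distrib]
    refine Finset.sum_congr rfl fun k _ => ?_
    rw [Measure.toSignedMeasure_smul, Measure.toSignedMeasure_smul,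
      NNReal.smul_def, NNReal.smul_def, diracSM]
    erw [← sub_smul]
    congr 1
    rw [Real.coe_toNNReal', Real.coe_toNNReal']
    rcases le_total 0 (c k) with hk | hk
    · rw [max_eq_left hk, max_eq_right (neg_nonpos.mpr hk), sub_zero]
    · rw [max_eq_right hk, max_eq_left (neg_nonneg.mpr hk), zero_sub, neg_neg]
  have hsint : ∀ f : X →ᵇ ℝ, sintegral (∑ k, c k • diracSM (xs k)) ⇑f
      = ∑ k, c k * f (xs k) := by
    intro f
    rw [my_sintegral_repr hrep f,
      integral_finset_sum_measure (fun k _ => f.integrable _),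
      integral_finset_sum_measure (fun k _ => f.integrable _),
      ← Finset.sum_sub_distrib]
    refine Finset.sum_congr rfl fun k _ => ?_
    rw [integral_smul_nnreal_measure, integral_smul_nnreal_measure, integral_dirac,
      NNReal.smul_def, NNReal.smul_def, smul_eq_mul, smul_eq_mul, ← sub_mul,
      Real.coe_toNNReal', Real.coe_toNNReal']
    congr 1
    rcases le_total 0 (c k) with hk | hk
    · rw [max_eq_left hk, max_eq_right (neg_nonpos.mpr hk), sub_zero]
    · rw [max_eq_right hk, max_eq_left (neg_nonneg.mpr hk), zero_sub, neg_neg]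
  have hinterp : ∀ j, sintegral (∑ k, c k • diracSM (xs k)) (K (xs j)) = y j := by
    intro j
    have hK : Kmat *ᵥ c = y := by
      rw [hc, Matrix.mulVec_mulVec, Matrix.mul_nonsing_inv _ hinv, Matrix.one_mulVec]
    have hs := hsint ((K (xs j)).toBCF)
    rw [hcoe] at hs
    rw [hs]
    calc ∑ k, c k * (K (xs j)) (xs k) = ∑ k, Kmat j k * c k := by
          refine Finset.sum_congr rfl fun k _ => ?_
          rw [← hKmat j k]; ring
    _ = (Kmat *ᵥ c) j := rfl
    _ = y j := by rw [hK]
  refine ⟨fun μ _ hI => claim1 μ hI, hinterp, ?_⟩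
  refine le_antisymm ?_ (claim1 _ hinterp)
  refine (my_tv_le hrep).trans_eq ?_
  rw [Measure.finset_sum_apply, Measure.finset_sum_apply,
    ENNReal.toReal_sum (fun _ _ => measure_ne_top _ _),
    ENNReal.toReal_sum (fun _ _ => measure_ne_top _ _),
    ← Finset.sum_add_distrib]
  refine Finset.sum_congr rfl fun k _ => ?_
  rw [Measure.smul_apply, Measure.smul_apply, Measure.dirac_apply_of_mem (Set.mem_univ _),
    ENNReal.smul_def, ENNReal.smul_def, smul_eq_mul, smul_eq_mul, mul_one, mul_one,
    ENNReal.coe_toReal, ENNReal.coe_toReal, Real.coe_toNNReal', Real.coe_toNNReal']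
  rcases le_total 0 (c k) with hk | hk
  · rw [max_eq_left hk, max_eq_right (neg_nonpos.mpr hk), add_zero, abs_of_nonneg hk]
  · rw [max_eq_right hk, max_eq_left (neg_nonneg.mpr hk), zero_add, abs_of_nonpos hk]
end

section
/- Suppose K(·,x) ∈ C₀(X) for every x ∈ X and span{K(·,x) : x ∈ X} is dense in C₀(X). Let x₁,…,x_m ∈ X be pairwise distinct, suppose K[x] is invertible and ‖K[x]^{-1} K_x(x)‖₁ ≤ 1 for all x ∈ X. Let y ∈ ℝ^m and λ > 0. If c* ∈ ℝ^m minimizes the function c ↦ (1/m) Σ_{j=1}^m |Σ_{k=1}^m c_k K(x_k,x_j) − y_j|² + λ‖c‖₁ over ℝ^m, then the measure μ* := Σ_{j=1}^m c*_j δ_{x_j} minimizes μ ↦ (1/m) Σ_{j=1}^m |f_μ(x_j) − y_j|² + λ‖μ‖ over all μ ∈ M(X). -/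
open MeasureTheory Matrix

section helpers
variable {X : Type*} [MeasurableSpace X]

lemma jordan_key (μ : SignedMeasure X) (p n : Measure X) [IsFiniteMeasure p] [IsFiniteMeasure n]
    (h : μ = p.toSignedMeasure - n.toSignedMeasure) :
    p + μ.toJordanDecomposition.negPart = n + μ.toJordanDecomposition.posPart := by
  have h2 : μ = μ.toJordanDecomposition.posPart.toSignedMeasure
      - μ.toJordanDecomposition.negPart.toSignedMeasure :=
    (μ.toSignedMeasure_toJordanDecomposition).symm
  rw [← Measure.toSignedMeasure_eq_toSignedMeasure_iff, Measure.toSignedMeasure_add,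
    Measure.toSignedMeasure_add]
  have h3 := h.symm.trans h2
  have := sub_eq_sub_iff_add_eq_add.mp h3
  linear_combination (norm := abel) this

lemma sintegral_eq (μ : SignedMeasure X) (p n : Measure X) [IsFiniteMeasure p] [IsFiniteMeasure n]
    (h : μ = p.toSignedMeasure - n.toSignedMeasure) (f : X → ℝ)
    (hp : Integrable f p) (hn : Integrable f n)
    (hpos : Integrable f μ.toJordanDecomposition.posPart)
    (hneg : Integrable f μ.toJordanDecomposition.negPart) :
    sintegral μ f = (∫ t, f t ∂p) - ∫ t, f t ∂n := by
  have key := jordan_key μ p n h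
  have : ∫ t, f t ∂(p + μ.toJordanDecomposition.negPart)
      = ∫ t, f t ∂(n + μ.toJordanDecomposition.posPart) := by rw [key]
  rw [integral_add_measure hp hneg, integral_add_measure hn hpos] at this
  unfold sintegral
  linarith

lemma tvNorm_le (μ : SignedMeasure X) (p n : Measure X) [IsFiniteMeasure p] [IsFiniteMeasure n]
    (h : μ = p.toSignedMeasure - n.toSignedMeasure) :
    tvNorm μ ≤ (p Set.univ).toReal + (n Set.univ).toReal := by
  have key := jordan_key μ p n h
  obtain ⟨s, hs, hps, hns⟩ := μ.toJordanDecomposition.mutuallySingular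
  set pos := μ.toJordanDecomposition.posPart
  set neg := μ.toJordanDecomposition.negPart
  have hposu : pos Set.univ = pos sᶜ := by
    rw [← measure_add_measure_compl hs, hps, zero_add]
  have hnegu : neg Set.univ = neg s := by
    rw [← measure_add_measure_compl hs, hns, add_zero]
  have h1 : pos sᶜ ≤ p Set.univ := by
    have := congrArg (fun ν : Measure X => ν sᶜ) key
    simp only [Measure.add_apply, hns, add_zero] at this
    calc pos sᶜ ≤ n sᶜ + pos sᶜ := le_add_self
    _ = p sᶜ := this.symm
    _ ≤ p Set.univ := measure_mono (Set.subset_univ _)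
  have h2 : neg s ≤ n Set.univ := by
    have := congrArg (fun ν : Measure X => ν s) key
    simp only [Measure.add_apply, hps, add_zero] at this
    calc neg s ≤ p s + neg s := le_add_self
    _ = n s := this
    _ ≤ n Set.univ := measure_mono (Set.subset_univ _)
  have : μ.totalVariation Set.univ = pos Set.univ + neg Set.univ := rfl
  unfold tvNorm
  rw [this, hposu, hnegu]
  have hfin1 : p Set.univ ≠ ⊤ := measure_ne_top _ _
  have hfin2 : n Set.univ ≠ ⊤ := measure_ne_top _ _
  rw [← ENNReal.toReal_add hfin1 hfin2]
  exact ENNReal.toReal_mono (by finiteness) (add_le_add h1 h2)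

lemma real_smul_sm (c : ℝ) (w : SignedMeasure X) :
    c • w = c.toNNReal • w - (-c).toNNReal • w := by
  ext i hi
  rw [VectorMeasure.sub_apply, VectorMeasure.smul_apply, VectorMeasure.smul_apply,
    VectorMeasure.smul_apply]
  simp only [NNReal.smul_def, smul_eq_mul, Real.coe_toNNReal']
  rcases le_total 0 c with hc | hc
  · rw [max_eq_left hc, max_eq_right (by linarith), zero_mul, sub_zero]
  · rw [max_eq_right hc, max_eq_left (by linarith), zero_mul, zero_sub, neg_mul, neg_neg]

lemma sm_sum_apply {ι : Type*} (s : Finset ι) (w : ι → VectorMeasure X ℝ) (i : Set X) :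
    (∑ k ∈ s, w k) i = ∑ k ∈ s, w k i := by
  induction s using Finset.cons_induction with
  | empty => simp
  | cons a s ha ih => rw [Finset.sum_cons, VectorMeasure.add_apply, ih, Finset.sum_cons]

lemma toSM_sum {ι : Type*} (s : Finset ι) (ν : ι → Measure X) [∀ i, IsFiniteMeasure (ν i)] :
    (∑ i ∈ s, ν i).toSignedMeasure = ∑ i ∈ s, (ν i).toSignedMeasure := by
  ext i hi
  rw [Measure.toSignedMeasure_apply_measurable hi, measureReal_def, sm_sum_apply, Measure.finset_sum_apply,
    ENNReal.toReal_sum (fun a _ => measure_ne_top _ _)]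
  exact Finset.sum_congr rfl fun a _ => (Measure.toSignedMeasure_apply_measurable hi).symm

lemma toNNReal_add_neg_toNNReal (r : ℝ) : (r.toNNReal : ℝ) + ((-r).toNNReal : ℝ) = |r| := by
  rw [Real.coe_toNNReal', Real.coe_toNNReal']
  rcases le_total 0 r with h | h
  · rw [abs_of_nonneg h, max_eq_left h, max_eq_right (neg_nonpos.mpr h), add_zero]
  · rw [abs_of_nonpos h, max_eq_right h, max_eq_left (neg_nonneg.mpr h), zero_add]

end helpers

/-- under density of `span{K(·,x)}` in `C₀(X)`, invertibility of `K[x]`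
(entries `(K[x])_{j,k} = K(x_k,x_j)`) and `‖K[x]⁻¹ K_x(x)‖₁ ≤ 1` for all `x`, if
`c*` minimizes `c ↦ (1/m)Σ_j |Σ_k c_k K(x_k,x_j) − y_j|² + λ‖c‖₁` over `ℝ^m`, then
`μ* := Σ_j c*_j δ_{x_j}` minimizes `μ ↦ (1/m)Σ_j |f_μ(x_j) − y_j|² + λ‖μ‖` over `M(X)`.
Here `K x : C₀(X,ℝ)` is `t ↦ K(t,x)`, so `K(x_k,x_j) = (K (xs j)) (xs k)` and
`f_μ(x_j) = sintegral μ (K (xs j))`. -/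
theorem stmt5 {X : Type*} [TopologicalSpace X] [LocallyCompactSpace X] [T2Space X]
    [MeasurableSpace X] [BorelSpace X]
    (K : X → ZeroAtInftyContinuousMap X ℝ)
    (hdense : Dense (↑(Submodule.span ℝ (Set.range K)) :
      Set (ZeroAtInftyContinuousMap X ℝ)))
    (m : ℕ) (xs : Fin m → X) (hxs : Function.Injective xs)
    (Kmat : Matrix (Fin m) (Fin m) ℝ)
    (hKmat : ∀ j k, Kmat j k = (K (xs j)) (xs k))
    (hinv : IsUnit Kmat.det)
    (hH2 : ∀ x : X, ∑ j, |(Kmat⁻¹ *ᵥ fun j => (K (xs j)) x) j| ≤ 1)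
    (y : Fin m → ℝ) (lam : ℝ) (hlam : 0 < lam)
    (cstar : Fin m → ℝ)
    (hmin : ∀ c : Fin m → ℝ,
      (1 / (m : ℝ)) * ∑ j, |(∑ k, cstar k * (K (xs j)) (xs k)) - y j| ^ 2
          + lam * ∑ k, |cstar k|
        ≤ (1 / (m : ℝ)) * ∑ j, |(∑ k, c k * (K (xs j)) (xs k)) - y j| ^ 2
          + lam * ∑ k, |c k|) :
    ∀ μ : SignedMeasure X, μ.totalVariation.Regular →
      (1 / (m : ℝ)) * ∑ j, |sintegral (∑ k, cstar k • diracSM (xs k)) (K (xs j)) - y j| ^ 2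
          + lam * tvNorm (∑ k, cstar k • diracSM (xs k))
        ≤ (1 / (m : ℝ)) * ∑ j, |sintegral μ (K (xs j)) - y j| ^ 2 + lam * tvNorm μ := by
  intro μ _
  -- integrability of the kernel sections
  have hint : ∀ (x : X) (ν : Measure X) [IsFiniteMeasure ν], Integrable (⇑(K x)) ν := by
    intro x ν _
    exact (K x).toBCF.integrable ν
  -- the measure μ* and its positive/negative parts
  set μstar : SignedMeasure X := ∑ k, cstar k • diracSM (xs k) with hμstar
  set pstar : Measure X := ∑ k, (cstar k).toNNReal • Measure.dirac (xs k) with hpstar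
  set nstar : Measure X := ∑ k, (-(cstar k)).toNNReal • Measure.dirac (xs k) with hnstar
  have hrep : μstar = pstar.toSignedMeasure - nstar.toSignedMeasure := by
    have h1 : pstar.toSignedMeasure
        = ∑ k, ((cstar k).toNNReal • Measure.dirac (xs k)).toSignedMeasure := toSM_sum _ _
    have h2 : nstar.toSignedMeasure
        = ∑ k, ((-(cstar k)).toNNReal • Measure.dirac (xs k)).toSignedMeasure := toSM_sum _ _
    rw [hμstar, h1, h2, ← Finset.sum_sub_distrib]
    refine Finset.sum_congr rfl fun k _ => ?_
    rw [Measure.toSignedMeasure_smul, Measure.toSignedMeasure_smul]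
    exact real_smul_sm _ _
  -- values of integrals against pstar / nstar
  have hips : ∀ f : X → ℝ, (∀ ν : Measure X, ∀ _ : IsFiniteMeasure ν, Integrable f ν) →
      (∫ t, f t ∂pstar = ∑ k, ((cstar k).toNNReal : ℝ) * f (xs k)) ∧
      (∫ t, f t ∂nstar = ∑ k, ((-(cstar k)).toNNReal : ℝ) * f (xs k)) := by
    intro f hf
    constructor
    · rw [hpstar, integral_finset_sum_measure (fun k _ => hf _ inferInstance)]
      refine Finset.sum_congr rfl fun k _ => ?_
      rw [integral_smul_nnreal_measure, integral_dirac]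
      simp [NNReal.smul_def]
    · rw [hnstar, integral_finset_sum_measure (fun k _ => hf _ inferInstance)]
      refine Finset.sum_congr rfl fun k _ => ?_
      rw [integral_smul_nnreal_measure, integral_dirac]
      simp [NNReal.smul_def]
  -- Step 1: sintegral of μstar
  have hstep1 : ∀ j, sintegral μstar (K (xs j)) = ∑ k, cstar k * (K (xs j)) (xs k) := by
    intro j
    have hf : ∀ ν : Measure X, ∀ _ : IsFiniteMeasure ν, Integrable (⇑(K (xs j))) ν :=
      fun ν _ => hint _ ν
    obtain ⟨h1, h2⟩ := hips (⇑(K (xs j))) hf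
    rw [sintegral_eq μstar pstar nstar hrep _ (hf _ inferInstance) (hf _ inferInstance)
      (hf _ inferInstance) (hf _ inferInstance), h1, h2, ← Finset.sum_sub_distrib]
    refine Finset.sum_congr rfl fun k _ => ?_
    rw [← sub_mul]
    congr 1
    simp [Real.coe_toNNReal']
  -- Step 2: tvNorm of μstar
  have hstep2 : tvNorm μstar ≤ ∑ k, |cstar k| := by
    refine (tvNorm_le μstar pstar nstar hrep).trans ?_
    have hp : (pstar Set.univ).toReal = ∑ k, ((cstar k).toNNReal : ℝ) := by
      rw [hpstar]
      simp only [Measure.finset_sum_apply, Measure.smul_apply, measure_univ, ENNReal.smul_def,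
        smul_eq_mul, mul_one]
      rw [ENNReal.toReal_sum (fun k _ => ENNReal.coe_ne_top)]
      simp
    have hn : (nstar Set.univ).toReal = ∑ k, ((-(cstar k)).toNNReal : ℝ) := by
      rw [hnstar]
      simp only [Measure.finset_sum_apply, Measure.smul_apply, measure_univ, ENNReal.smul_def,
        smul_eq_mul, mul_one]
      rw [ENNReal.toReal_sum (fun k _ => ENNReal.coe_ne_top)]
      simp
    rw [hp, hn, ← Finset.sum_add_distrib]
    exact le_of_eq (Finset.sum_congr rfl fun k _ => toNNReal_add_neg_toNNReal _)
  -- the comparison coefficients for μ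
  set pos := μ.toJordanDecomposition.posPart with hposdef
  set neg := μ.toJordanDecomposition.negPart with hnegdef
  set v : Fin m → ℝ := fun j => sintegral μ (K (xs j)) with hv
  set c : Fin m → ℝ := Kmat⁻¹ *ᵥ v with hc
  -- Step 3: data fit of c matches that of μ
  have hstep3 : ∀ j, ∑ k, c k * (K (xs j)) (xs k) = v j := by
    intro j
    have : ∑ k, c k * (K (xs j)) (xs k) = (Kmat *ᵥ c) j := by
      simp only [Matrix.mulVec, dotProduct]
      exact Finset.sum_congr rfl fun k _ => by rw [hKmat j k, mul_comm]
    rw [this, hc, Matrix.mulVec_mulVec, Matrix.mul_nonsing_inv Kmat hinv, Matrix.one_mulVec]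
  -- Step 4: ℓ¹ norm of c is at most tvNorm μ
  have hstep4 : ∑ k, |c k| ≤ tvNorm μ := by
    set g : Fin m → X → ℝ := fun j t => (Kmat⁻¹ *ᵥ fun l => (K (xs l)) t) j with hg
    have hgint : ∀ j (ν : Measure X) [IsFiniteMeasure ν], Integrable (g j) ν := by
      intro j ν _
      have : g j = fun t => ∑ l, Kmat⁻¹ j l * (K (xs l)) t := by
        funext t; simp [hg, Matrix.mulVec, dotProduct]
      rw [this]
      exact integrable_finset_sum _ (fun l _ => (hint (xs l) ν).const_mul _)
    have hcg : ∀ j, c j = sintegral μ (g j) := by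
      intro j
      have hgrw : ∀ ν : Measure X, ∀ _ : IsFiniteMeasure ν,
          ∫ t, g j t ∂ν = ∑ l, Kmat⁻¹ j l * ∫ t, (K (xs l)) t ∂ν := by
        intro ν _
        have : ∀ t, g j t = ∑ l, Kmat⁻¹ j l * (K (xs l)) t := by
          intro t; simp [hg, Matrix.mulVec, dotProduct]
        rw [integral_congr_ae (Filter.Eventually.of_forall this),
          integral_finset_sum _ (fun l _ => (hint (xs l) ν).const_mul _)]
        exact Finset.sum_congr rfl fun l _ => integral_const_mul _ _
      rw [hc]
      show (Kmat⁻¹ *ᵥ v) j = _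
      unfold sintegral
      rw [hgrw pos inferInstance, hgrw neg inferInstance]
      simp only [Matrix.mulVec, dotProduct, hv]
      unfold sintegral
      rw [← Finset.sum_sub_distrib]
      exact Finset.sum_congr rfl fun l _ => by ring
    have habs : ∀ j, |c j| ≤ (∫ t, |g j t| ∂pos) + ∫ t, |g j t| ∂neg := by
      intro j
      rw [hcg j]
      unfold sintegral
      calc |(∫ t, g j t ∂pos) - ∫ t, g j t ∂neg|
          ≤ |∫ t, g j t ∂pos| + |∫ t, g j t ∂neg| := abs_sub _ _
        _ ≤ (∫ t, |g j t| ∂pos) + ∫ t, |g j t| ∂neg := by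
            gcongr
            · simpa [Real.norm_eq_abs] using norm_integral_le_integral_norm (μ := pos) (g j)
            · simpa [Real.norm_eq_abs] using norm_integral_le_integral_norm (μ := neg) (g j)
    have hsum : ∀ (ν : Measure X) [IsFiniteMeasure ν],
        ∑ j, ∫ t, |g j t| ∂ν ≤ (ν Set.univ).toReal := by
      intro ν _
      rw [← integral_finset_sum _ (fun j _ => (hgint j ν).abs)]
      calc ∫ t, ∑ j, |g j t| ∂ν ≤ ∫ _t, (1 : ℝ) ∂ν := by
            refine integral_mono (integrable_finset_sum _ (fun j _ => (hgint j ν).abs))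
              (integrable_const 1) ?_
            intro t
            exact hH2 t
        _ = (ν Set.univ).toReal := by simp [measureReal_def]
    calc ∑ j, |c j| ≤ ∑ j, ((∫ t, |g j t| ∂pos) + ∫ t, |g j t| ∂neg) :=
          Finset.sum_le_sum fun j _ => habs j
      _ = (∑ j, ∫ t, |g j t| ∂pos) + ∑ j, ∫ t, |g j t| ∂neg := Finset.sum_add_distrib
      _ ≤ (pos Set.univ).toReal + (neg Set.univ).toReal :=
          add_le_add (hsum pos) (hsum neg)
      _ = tvNorm μ := by
          unfold tvNorm
          rw [show μ.totalVariation Set.univ = pos Set.univ + neg Set.univ from rfl,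
            ENNReal.toReal_add (measure_ne_top _ _) (measure_ne_top _ _)]
  -- final chain
  have hmnonneg : (0 : ℝ) ≤ 1 / (m : ℝ) := by positivity
  calc (1 / (m : ℝ)) * ∑ j, |sintegral μstar (K (xs j)) - y j| ^ 2 + lam * tvNorm μstar
      ≤ (1 / (m : ℝ)) * ∑ j, |(∑ k, cstar k * (K (xs j)) (xs k)) - y j| ^ 2
          + lam * ∑ k, |cstar k| := by
        rw [show (∑ j, |sintegral μstar (K (xs j)) - y j| ^ 2)
            = ∑ j, |(∑ k, cstar k * (K (xs j)) (xs k)) - y j| ^ 2 from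
          Finset.sum_congr rfl (fun j _ => by rw [hstep1 j])]
        have := mul_le_mul_of_nonneg_left hstep2 hlam.le
        linarith
    _ ≤ (1 / (m : ℝ)) * ∑ j, |(∑ k, c k * (K (xs j)) (xs k)) - y j| ^ 2
          + lam * ∑ k, |c k| := hmin c
    _ ≤ (1 / (m : ℝ)) * ∑ j, |sintegral μ (K (xs j)) - y j| ^ 2 + lam * tvNorm μ := by
        rw [show (∑ j, |(∑ k, c k * (K (xs j)) (xs k)) - y j| ^ 2)
            = ∑ j, |sintegral μ (K (xs j)) - y j| ^ 2 from
          Finset.sum_congr rfl (fun j _ => by rw [hstep3 j, hv])]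
        have := mul_le_mul_of_nonneg_left hstep4 hlam.le
        linarith
end

section
/- Suppose K(·,x) ∈ C₀(X) for every x ∈ X, span{K(·,x) : x ∈ X} is dense in C₀(X), and let x₁,…,x_m ∈ X be pairwise distinct with K[x] invertible. The following are equivalent: (i) for every y ∈ ℝ^m, the minimal norm interpolation problem inf{‖ν‖ : ν ∈ M(X), ν supported on a countable subset of X, f_ν(x_j) = y_j for all j} has a minimizer of the form Σ_{j=1}^m c_j δ_{x_j} for some c ∈ ℝ^m; (ii) ‖K[x]^{-1} K_x(x)‖₁ ≤ 1 for all x ∈ X. -/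
open MeasureTheory Matrix

/-- A signed measure is supported on a countable subset of `X`. -/
def CountablySupported {X : Type*} [MeasurableSpace X] (ν : SignedMeasure X) : Prop :=
  ∃ S : Set X, S.Countable ∧ ν.totalVariation Sᶜ = 0

set_option linter.unusedSectionVars false

section Helpers

variable {X : Type*} [MeasurableSpace X]

lemma ind_ne_top (i : Set X) (z : X) : i.indicator (1 : X → ENNReal) z ≠ ⊤ := by
  classical rw [Set.indicator_apply]; split_ifs <;> simp

lemma toJD_sub (p q : Measure X) [IsFiniteMeasure p] [IsFiniteMeasure q] (h : p ⟂ₘ q) :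
    (p.toSignedMeasure - q.toSignedMeasure).toJordanDecomposition = ⟨p, q, h⟩ := by
  have h1 : (⟨p, q, h⟩ : JordanDecomposition X).toSignedMeasure
      = p.toSignedMeasure - q.toSignedMeasure := rfl
  rw [← h1, JordanDecomposition.toJordanDecomposition_toSignedMeasure]

lemma integrable_of_bdd [TopologicalSpace X] [OpensMeasurableSpace X]
    {μ : Measure X} [IsFiniteMeasure μ]
    {f : X → ℝ} (hf : Continuous f) {C : ℝ} (hC : ∀ t, |f t| ≤ C) : Integrable f μ :=
  (integrable_const C).mono' hf.aestronglyMeasurable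
    (Filter.Eventually.of_forall (by simpa [Real.norm_eq_abs] using hC))

lemma sintegral_toSM_sub [TopologicalSpace X] [OpensMeasurableSpace X]
    (p q : Measure X) [IsFiniteMeasure p] [IsFiniteMeasure q]
    {f : X → ℝ} (hf : Continuous f) {C : ℝ} (hC : ∀ t, |f t| ≤ C) :
    sintegral (p.toSignedMeasure - q.toSignedMeasure) f = ∫ t, f t ∂p - ∫ t, f t ∂q := by
  set s := p.toSignedMeasure - q.toSignedMeasure with hs
  set P := s.toJordanDecomposition.posPart with hP
  set N := s.toJordanDecomposition.negPart with hN
  have h1 : P.toSignedMeasure - N.toSignedMeasure = p.toSignedMeasure - q.toSignedMeasure := by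
    have h := s.toSignedMeasure_toJordanDecomposition
    rw [JordanDecomposition.toSignedMeasure] at h
    exact h
  have h2 : (P + q).toSignedMeasure = (N + p).toSignedMeasure := by
    rw [Measure.toSignedMeasure_add, Measure.toSignedMeasure_add]
    rw [sub_eq_sub_iff_add_eq_add] at h1
    rw [h1]; abel
  have h3 : P + q = N + p := Measure.toSignedMeasure_eq_toSignedMeasure_iff.1 h2
  have h4 : ∫ t, f t ∂P + ∫ t, f t ∂q = ∫ t, f t ∂N + ∫ t, f t ∂p := by
    rw [← integral_add_measure (integrable_of_bdd hf hC) (integrable_of_bdd hf hC),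
      ← integral_add_measure (integrable_of_bdd hf hC) (integrable_of_bdd hf hC), h3]
  rw [sintegral, ← hP, ← hN]
  linarith

lemma tvNorm_eq (ν : SignedMeasure X) :
    tvNorm ν = (ν.toJordanDecomposition.posPart Set.univ).toReal
      + (ν.toJordanDecomposition.negPart Set.univ).toReal := by
  rw [tvNorm, SignedMeasure.totalVariation, Measure.add_apply,
    ENNReal.toReal_add (measure_ne_top _ _) (measure_ne_top _ _)]

lemma tvNorm_nonneg (ν : SignedMeasure X) : 0 ≤ tvNorm ν := ENNReal.toReal_nonneg

lemma abs_sintegral_le [TopologicalSpace X] [OpensMeasurableSpace X]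
    (ν : SignedMeasure X) {f : X → ℝ} (hf : Continuous f)
    {C : ℝ} (hC : ∀ t, |f t| ≤ C) (hC0 : 0 ≤ C) :
    |sintegral ν f| ≤ C * tvNorm ν := by
  set P := ν.toJordanDecomposition.posPart with hP
  set N := ν.toJordanDecomposition.negPart with hN
  have key : ∀ μ : Measure X, IsFiniteMeasure μ → |∫ t, f t ∂μ| ≤ C * (μ Set.univ).toReal := by
    intro μ hfin
    calc |∫ t, f t ∂μ| ≤ ∫ t, |f t| ∂μ := by
          simpa [Real.norm_eq_abs] using norm_integral_le_integral_norm (μ := μ) f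
      _ ≤ ∫ _, C ∂μ := integral_mono (integrable_of_bdd hf hC).abs (integrable_const C)
          (fun t => hC t)
      _ = C * (μ Set.univ).toReal := by rw [integral_const, smul_eq_mul, mul_comm]; rfl
  have h1 := key P inferInstance
  have h2 := key N inferInstance
  have h3 : |sintegral ν f| ≤ |∫ t, f t ∂P| + |∫ t, f t ∂N| := abs_sub _ _
  rw [tvNorm_eq]
  calc |sintegral ν f| ≤ |∫ t, f t ∂P| + |∫ t, f t ∂N| := h3
    _ ≤ C * (P Set.univ).toReal + C * (N Set.univ).toReal := add_le_add h1 h2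
    _ = C * ((P Set.univ).toReal + (N Set.univ).toReal) := by ring

lemma regular_of_finite_support [TopologicalSpace X] [T1Space X] [OpensMeasurableSpace X]
    (μ : Measure X) [IsFiniteMeasure μ] (F : Set X) (hF : F.Finite)
    (key : ∀ s t : Set X, MeasurableSet s → MeasurableSet t →
      (∀ z ∈ F, z ∈ s ↔ z ∈ t) → μ s = μ t) : μ.Regular := by
  have hout : μ.OuterRegular := by
    refine ⟨fun A hA r hr => ?_⟩
    refine ⟨(F \ A)ᶜ, fun a ha h => h.2 ha,
      ((hF.subset Set.diff_subset).isClosed).isOpen_compl, ?_⟩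
    rw [key _ A (((hF.subset Set.diff_subset).isClosed).isOpen_compl).measurableSet hA
      (fun z hz => by simp [hz])]
    exact hr
  have hin : μ.InnerRegularWRT IsCompact IsOpen := by
    intro U hU r hr
    refine ⟨F ∩ U, Set.inter_subset_right, (hF.subset Set.inter_subset_left).isCompact, ?_⟩
    rwa [key (F ∩ U) U ((hF.subset Set.inter_subset_left).measurableSet) hU.measurableSet
      (fun z hz => by simp [hz])]
  exact { toIsFiniteMeasureOnCompacts := inferInstance, toOuterRegular := hout,
          innerRegular := hin }

end Helpers

section SumDirac

variable {X : Type*} [MeasurableSpace X] [MeasurableSingletonClass X]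

lemma finsum_dirac_apply {m : ℕ} (x : Fin m → X)
    (a : Fin m → ENNReal) (s : Set X) :
    (∑ k, a k • Measure.dirac (x k)) s = ∑ k, a k * s.indicator 1 (x k) := by
  rw [Measure.finset_sum_apply]
  simp [Measure.dirac_apply]

lemma isFiniteMeasure_finsum_dirac {m : ℕ} (x : Fin m → X)
    (a : Fin m → ENNReal) (ha : ∀ k, a k ≠ ⊤) :
    IsFiniteMeasure (∑ k, a k • Measure.dirac (x k)) := by
  constructor
  rw [finsum_dirac_apply]
  exact ENNReal.sum_lt_top.2 fun k _ => by
    simpa [Set.indicator_univ] using (ha k).lt_top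

/-- positive part of `∑ c k • δ_{x k}` -/
noncomputable def posP {m : ℕ} (x : Fin m → X) (c : Fin m → ℝ) : Measure X :=
  ∑ k, ENNReal.ofReal (c k) • Measure.dirac (x k)

/-- negative part of `∑ c k • δ_{x k}` -/
noncomputable def negP {m : ℕ} (x : Fin m → X) (c : Fin m → ℝ) : Measure X :=
  ∑ k, ENNReal.ofReal (-c k) • Measure.dirac (x k)

instance posP_finite {m : ℕ} (x : Fin m → X) (c : Fin m → ℝ) : IsFiniteMeasure (posP x c) :=
  isFiniteMeasure_finsum_dirac x _ (fun _ => ENNReal.ofReal_ne_top)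

instance negP_finite {m : ℕ} (x : Fin m → X) (c : Fin m → ℝ) : IsFiniteMeasure (negP x c) :=
  isFiniteMeasure_finsum_dirac x _ (fun _ => ENNReal.ofReal_ne_top)

instance ofReal_smul_dirac_finite (r : ℝ) (z : X) :
    IsFiniteMeasure (ENNReal.ofReal r • Measure.dirac z) :=
  ⟨by simp [Measure.smul_apply, ENNReal.ofReal_lt_top]⟩

lemma mutuallySingular_posP_negP {m : ℕ} {x : Fin m → X} (hx : Function.Injective x)
    (c : Fin m → ℝ) : posP x c ⟂ₘ negP x c := by
  refine ⟨(x '' {k | 0 ≤ c k})ᶜ, (((Set.finite_range x).subset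
    (Set.image_subset_range _ _)).measurableSet).compl, ?_, ?_⟩
  · rw [posP, finsum_dirac_apply]
    refine Finset.sum_eq_zero fun k _ => ?_
    rcases le_or_gt 0 (c k) with h | h
    · have hmem : x k ∈ x '' {k | 0 ≤ c k} := ⟨k, h, rfl⟩
      rw [Set.indicator_of_notMem (by simpa using hmem), mul_zero]
    · rw [ENNReal.ofReal_eq_zero.2 h.le, zero_mul]
  · rw [negP, compl_compl, finsum_dirac_apply]
    refine Finset.sum_eq_zero fun k _ => ?_
    by_cases h : x k ∈ x '' {k | 0 ≤ c k}
    · obtain ⟨k', hk', hkk⟩ := h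
      have hk := hx hkk
      subst hk
      rw [ENNReal.ofReal_eq_zero.2 (by simpa using hk'), zero_mul]
    · rw [Set.indicator_of_notMem h, mul_zero]

omit [MeasurableSingletonClass X] in
lemma sum_smul_diracSM_coe {m : ℕ} (v : Fin m → SignedMeasure X) (i : Set X) :
    (∑ k, v k) i = ∑ k, v k i := by
  have h := map_sum (VectorMeasure.coeFnAddMonoidHom (SignedMeasure X) (Set X) ℝ) v Finset.univ
  calc (∑ k, v k) i = (VectorMeasure.coeFnAddMonoidHom (SignedMeasure X) (Set X) ℝ (∑ k, v k)) i := rfl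
    _ = ∑ k, v k i := by rw [h]; simp [VectorMeasure.coeFnAddMonoidHom]

lemma sum_smul_diracSM_eq {m : ℕ} (x : Fin m → X) (c : Fin m → ℝ) :
    (∑ k, c k • diracSM (x k)) = (posP x c).toSignedMeasure - (negP x c).toSignedMeasure := by
  ext i hi
  rw [VectorMeasure.sub_apply, Measure.toSignedMeasure_apply_measurable hi,
    Measure.toSignedMeasure_apply_measurable hi, posP, negP, measureReal_def, measureReal_def,
    finsum_dirac_apply, finsum_dirac_apply,
    ENNReal.toReal_sum (fun k _ => ENNReal.mul_ne_top ENNReal.ofReal_ne_top (ind_ne_top i (x k))),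
    ENNReal.toReal_sum (fun k _ => ENNReal.mul_ne_top ENNReal.ofReal_ne_top (ind_ne_top i (x k))),
    sum_smul_diracSM_coe, ← Finset.sum_sub_distrib]
  refine Finset.sum_congr rfl fun k _ => ?_
  rw [VectorMeasure.smul_apply, diracSM, Measure.toSignedMeasure_apply_measurable hi,
    measureReal_def, Measure.dirac_apply, ENNReal.toReal_mul, ENNReal.toReal_mul,
    ENNReal.toReal_ofReal', ENNReal.toReal_ofReal', smul_eq_mul, ← sub_mul]
  congr 1
  rcases le_or_gt 0 (c k) with h | h
  · rw [max_eq_left h, max_eq_right (by linarith), sub_zero]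
  · rw [max_eq_right h.le, max_eq_left (by linarith), zero_sub, neg_neg]

lemma toJD_sum {m : ℕ} {x : Fin m → X} (hx : Function.Injective x) (c : Fin m → ℝ) :
    (∑ k, c k • diracSM (x k)).toJordanDecomposition
      = ⟨posP x c, negP x c, mutuallySingular_posP_negP hx c⟩ := by
  rw [sum_smul_diracSM_eq]
  exact toJD_sub _ _ _

lemma posP_univ {m : ℕ} (x : Fin m → X) (c : Fin m → ℝ) :
    ((posP x c) Set.univ).toReal = ∑ k, max (c k) 0 := by
  rw [posP, finsum_dirac_apply,
    ENNReal.toReal_sum (fun k _ => ENNReal.mul_ne_top ENNReal.ofReal_ne_top (ind_ne_top _ _))]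
  simp [ENNReal.toReal_ofReal']

lemma negP_univ {m : ℕ} (x : Fin m → X) (c : Fin m → ℝ) :
    ((negP x c) Set.univ).toReal = ∑ k, max (-c k) 0 := by
  rw [negP, finsum_dirac_apply,
    ENNReal.toReal_sum (fun k _ => ENNReal.mul_ne_top ENNReal.ofReal_ne_top (ind_ne_top _ _))]
  simp [ENNReal.toReal_ofReal']

lemma tvNorm_sum {m : ℕ} {x : Fin m → X} (hx : Function.Injective x) (c : Fin m → ℝ) :
    tvNorm (∑ k, c k • diracSM (x k)) = ∑ k, |c k| := by
  rw [tvNorm_eq, toJD_sum hx, posP_univ, negP_univ, ← Finset.sum_add_distrib]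
  refine Finset.sum_congr rfl fun k _ => ?_
  rcases le_or_gt 0 (c k) with h | h
  · rw [abs_of_nonneg h, max_eq_left h, max_eq_right (by linarith)]; ring
  · rw [abs_of_neg h, max_eq_right h.le, max_eq_left (by linarith)]; ring

lemma sintegral_sum [TopologicalSpace X] [OpensMeasurableSpace X]
    {m : ℕ} {x : Fin m → X} (hx : Function.Injective x) (c : Fin m → ℝ)
    {f : X → ℝ} (hf : Continuous f) {C : ℝ} (hC : ∀ t, |f t| ≤ C) :
    sintegral (∑ k, c k • diracSM (x k)) f = ∑ k, c k * f (x k) := by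
  rw [sintegral, toJD_sum hx]
  have h1 : ∫ t, f t ∂(posP x c) = ∑ k, max (c k) 0 * f (x k) := by
    rw [posP, integral_finset_sum_measure (fun k _ => integrable_of_bdd hf hC)]
    refine Finset.sum_congr rfl fun k _ => ?_
    rw [integral_smul_measure, integral_dirac, ENNReal.toReal_ofReal', smul_eq_mul]
  have h2 : ∫ t, f t ∂(negP x c) = ∑ k, max (-c k) 0 * f (x k) := by
    rw [negP, integral_finset_sum_measure (fun k _ => integrable_of_bdd hf hC)]
    refine Finset.sum_congr rfl fun k _ => ?_
    rw [integral_smul_measure, integral_dirac, ENNReal.toReal_ofReal', smul_eq_mul]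
  rw [h1, h2, ← Finset.sum_sub_distrib]
  refine Finset.sum_congr rfl fun k _ => ?_
  rw [← sub_mul]
  congr 1
  rcases le_or_gt 0 (c k) with h | h
  · rw [max_eq_left h, max_eq_right (by linarith)]; ring
  · rw [max_eq_right h.le, max_eq_left (by linarith)]; ring

lemma totalVariation_sum {m : ℕ} {x : Fin m → X} (hx : Function.Injective x) (c : Fin m → ℝ) :
    (∑ k, c k • diracSM (x k)).totalVariation = posP x c + negP x c := by
  rw [SignedMeasure.totalVariation, toJD_sum hx]

end SumDirac

/-- with `K(·,x) ∈ C₀(X)` (`K x : C₀(X,ℝ)` is `t ↦ K(t,x)`), density of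
`span{K(·,x)}` in `C₀(X)`, pairwise distinct `x₁,…,x_m`, and `K[x]`
(entries `(K[x])_{j,k} = K(x_k,x_j)`) invertible, the following are equivalent:
(i) for every `y ∈ ℝ^m` the minimal norm interpolation over countably supported measures
has a minimizer of the form `Σ_j c_j δ_{x_j}`;
(ii) `‖K[x]⁻¹ K_x(x)‖₁ ≤ 1` for all `x ∈ X`. -/
theorem stmt6 {X : Type*} [TopologicalSpace X] [LocallyCompactSpace X] [T2Space X]
    [MeasurableSpace X] [BorelSpace X]
    (K : X → ZeroAtInftyContinuousMap X ℝ)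
    (hdense : Dense (↑(Submodule.span ℝ (Set.range K)) :
      Set (ZeroAtInftyContinuousMap X ℝ)))
    (m : ℕ) (xs : Fin m → X) (hxs : Function.Injective xs)
    (Kmat : Matrix (Fin m) (Fin m) ℝ)
    (hKmat : ∀ j k, Kmat j k = (K (xs j)) (xs k))
    (hinv : IsUnit Kmat.det) :
    (∀ y : Fin m → ℝ, ∃ c : Fin m → ℝ,
      (∀ j, sintegral (∑ k, c k • diracSM (xs k)) (K (xs j)) = y j) ∧
      tvNorm (∑ k, c k • diracSM (xs k)) =
        sInf {r : ℝ | ∃ ν : SignedMeasure X, ν.totalVariation.Regular ∧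
          CountablySupported ν ∧ (∀ j, sintegral ν (K (xs j)) = y j) ∧ tvNorm ν = r})
    ↔ (∀ x : X, ∑ j, |(Kmat⁻¹ *ᵥ fun j => (K (xs j)) x) j| ≤ 1) := by
  classical
  have hcont : ∀ j, Continuous (⇑(K (xs j)) : X → ℝ) := fun j => map_continuous (K (xs j))
  have hbd : ∀ j t, |(K (xs j)) t| ≤ ‖(K (xs j)).toBCF‖ := fun j t => by
    simpa [Real.norm_eq_abs] using (K (xs j)).toBCF.norm_coe_le_norm t
  -- the value of sintegral on sums of diracs, in matrix form
  have hsum : ∀ (c : Fin m → ℝ) (j : Fin m),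
      sintegral (∑ k, c k • diracSM (xs k)) (K (xs j)) = (Kmat *ᵥ c) j := by
    intro c j
    rw [sintegral_sum hxs c (hcont j) (hbd j)]
    simp only [Matrix.mulVec, dotProduct]
    exact Finset.sum_congr rfl fun k _ => by rw [hKmat j k, mul_comm]
  have hbddS : ∀ y : Fin m → ℝ, BddBelow {r : ℝ | ∃ ν : SignedMeasure X,
      ν.totalVariation.Regular ∧ CountablySupported ν ∧
      (∀ j, sintegral ν (K (xs j)) = y j) ∧ tvNorm ν = r} := by
    intro y
    exact ⟨0, fun r hr => by obtain ⟨ν, -, -, -, hr⟩ := hr; exact hr ▸ tvNorm_nonneg ν⟩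
  constructor
  · -- (i) → (ii)
    intro hmin x
    set y : Fin m → ℝ := fun j => (K (xs j)) x with hy
    obtain ⟨c, hc1, hc2⟩ := hmin y
    have hKc : Kmat *ᵥ c = y := by
      funext j
      rw [← hc1 j, hsum c j]
    have hcy : c = Kmat⁻¹ *ᵥ y := by
      rw [← hKc, Matrix.mulVec_mulVec, Matrix.nonsing_inv_mul _ hinv, Matrix.one_mulVec]
    -- the dirac measure at x is admissible with tvNorm 1
    have hrepr : diracSM x = (Measure.dirac x).toSignedMeasure
        - (0 : Measure X).toSignedMeasure := by
      rw [Measure.toSignedMeasure_zero, sub_zero, diracSM]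
    have hJD : (diracSM x).toJordanDecomposition
        = ⟨Measure.dirac x, 0, Measure.MutuallySingular.zero_right⟩ := by
      rw [hrepr]; exact toJD_sub _ _ _
    have hTV : (diracSM x).totalVariation = Measure.dirac x := by
      rw [SignedMeasure.totalVariation, hJD, add_zero]
    have hδreg : (diracSM x).totalVariation.Regular := by
      rw [hTV]
      refine regular_of_finite_support _ {x} (Set.finite_singleton x) ?_
      intro s t _ _ h
      rw [Measure.dirac_apply, Measure.dirac_apply, Set.indicator_apply, Set.indicator_apply,
        if_congr (h x rfl) rfl rfl]
    have hδcs : CountablySupported (diracSM x) := by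
      refine ⟨{x}, Set.countable_singleton x, ?_⟩
      rw [hTV, Measure.dirac_apply, Set.indicator_of_notMem (by simp)]
    have hδint : ∀ j, sintegral (diracSM x) (K (xs j)) = y j := by
      intro j
      rw [hrepr, sintegral_toSM_sub _ _ (hcont j) (hbd j), integral_dirac,
        integral_zero_measure, sub_zero]
    have hδtv : tvNorm (diracSM x) = 1 := by
      rw [tvNorm_eq, hJD]
      simp
    have hmem : (1 : ℝ) ∈ {r : ℝ | ∃ ν : SignedMeasure X, ν.totalVariation.Regular ∧
        CountablySupported ν ∧ (∀ j, sintegral ν (K (xs j)) = y j) ∧ tvNorm ν = r} :=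
      ⟨diracSM x, hδreg, hδcs, hδint, hδtv⟩
    have hle : tvNorm (∑ k, c k • diracSM (xs k)) ≤ 1 := by
      rw [hc2]; exact csInf_le (hbddS y) hmem
    rw [tvNorm_sum hxs] at hle
    calc ∑ j, |(Kmat⁻¹ *ᵥ y) j| = ∑ j, |c j| := by rw [← hcy]
      _ ≤ 1 := hle
  · -- (ii) → (i)
    intro hcond y
    set c : Fin m → ℝ := Kmat⁻¹ *ᵥ y with hc
    have hint : ∀ j, sintegral (∑ k, c k • diracSM (xs k)) (K (xs j)) = y j := by
      intro j
      rw [hsum c j, hc, Matrix.mulVec_mulVec, Matrix.mul_nonsing_inv _ hinv, Matrix.one_mulVec]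
    refine ⟨c, hint, ?_⟩
    have hreg : (∑ k, c k • diracSM (xs k)).totalVariation.Regular := by
      rw [totalVariation_sum hxs c]
      refine regular_of_finite_support _ (Set.range xs) (Set.finite_range xs) ?_
      intro s t _ _ h
      rw [Measure.add_apply, Measure.add_apply, posP, negP, finsum_dirac_apply,
        finsum_dirac_apply, finsum_dirac_apply, finsum_dirac_apply]
      congr 1 <;> exact Finset.sum_congr rfl fun k _ => by
        rw [Set.indicator_apply, Set.indicator_apply, if_congr (h (xs k) ⟨k, rfl⟩) rfl rfl]
    have hcs : CountablySupported (∑ k, c k • diracSM (xs k)) := by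
      refine ⟨Set.range xs, (Set.finite_range xs).countable, ?_⟩
      rw [totalVariation_sum hxs c, Measure.add_apply, posP, negP, finsum_dirac_apply,
        finsum_dirac_apply]
      rw [Finset.sum_eq_zero fun k _ => by
          rw [Set.indicator_of_notMem (by simp : xs k ∉ (Set.range xs)ᶜ), mul_zero],
        Finset.sum_eq_zero fun k _ => by
          rw [Set.indicator_of_notMem (by simp : xs k ∉ (Set.range xs)ᶜ), mul_zero],
        add_zero]
    have hmemS : tvNorm (∑ k, c k • diracSM (xs k)) ∈ {r : ℝ | ∃ ν : SignedMeasure X,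
        ν.totalVariation.Regular ∧ CountablySupported ν ∧
        (∀ j, sintegral ν (K (xs j)) = y j) ∧ tvNorm ν = r} :=
      ⟨_, hreg, hcs, hint, rfl⟩
    have hlb : ∀ r ∈ {r : ℝ | ∃ ν : SignedMeasure X, ν.totalVariation.Regular ∧
        CountablySupported ν ∧ (∀ j, sintegral ν (K (xs j)) = y j) ∧ tvNorm ν = r},
        tvNorm (∑ k, c k • diracSM (xs k)) ≤ r := by
      rintro r ⟨ν, -, -, hintν, rfl⟩
      set s : Fin m → ℝ := fun k => if 0 ≤ c k then 1 else -1 with hs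
      set a : Fin m → ℝ := fun j => ∑ k, Kmat⁻¹ k j * s k with ha
      set g : X → ℝ := fun t => ∑ j, a j * (K (xs j)) t with hg
      have hgswap : ∀ v : Fin m → ℝ, ∑ j, a j * v j
          = ∑ k, s k * ((Kmat⁻¹ *ᵥ v) k) := by
        intro v
        simp only [ha, Matrix.mulVec, dotProduct, Finset.sum_mul, Finset.mul_sum]
        rw [Finset.sum_comm]
        exact Finset.sum_congr rfl fun k _ => Finset.sum_congr rfl fun j _ => by ring
      have hgc : Continuous g := by
        apply continuous_finset_sum
        exact fun j _ => continuous_const.mul (hcont j)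
      have hgbd : ∀ t, |g t| ≤ 1 := by
        intro t
        rw [hg]
        calc |∑ j, a j * (K (xs j)) t| = |∑ k, s k * ((Kmat⁻¹ *ᵥ fun j => (K (xs j)) t) k)| := by
              rw [hgswap]
          _ ≤ ∑ k, |s k * ((Kmat⁻¹ *ᵥ fun j => (K (xs j)) t) k)| := Finset.abs_sum_le_sum_abs _ _
          _ = ∑ k, |(Kmat⁻¹ *ᵥ fun j => (K (xs j)) t) k| := by
              refine Finset.sum_congr rfl fun k _ => ?_
              rw [abs_mul]
              by_cases h : 0 ≤ c k <;> simp [hs, h]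
          _ ≤ 1 := hcond t
      have hCg : ∀ j, Integrable (⇑(K (xs j)))
          ν.toJordanDecomposition.posPart ∧ Integrable (⇑(K (xs j)))
          ν.toJordanDecomposition.negPart :=
        fun j => ⟨integrable_of_bdd (hcont j) (hbd j), integrable_of_bdd (hcont j) (hbd j)⟩
      have hsg : sintegral ν g = ∑ j, a j * sintegral ν (K (xs j)) := by
        rw [sintegral, hg]
        rw [integral_finset_sum _ (fun j _ => ((hCg j).1.const_mul (a j))),
          integral_finset_sum _ (fun j _ => ((hCg j).2.const_mul (a j)))]
        rw [← Finset.sum_sub_distrib]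
        refine Finset.sum_congr rfl fun j _ => ?_
        rw [integral_const_mul, integral_const_mul, sintegral]
        ring
      have hval : sintegral ν g = ∑ k, |c k| := by
        rw [hsg]
        have h1 : ∀ j, sintegral ν (K (xs j)) = y j := hintν
        calc ∑ j, a j * sintegral ν (K (xs j)) = ∑ j, a j * y j := by
              exact Finset.sum_congr rfl fun j _ => by rw [h1 j]
          _ = ∑ k, s k * ((Kmat⁻¹ *ᵥ y) k) := hgswap y
          _ = ∑ k, |c k| := by
              refine Finset.sum_congr rfl fun k _ => ?_
              rw [← hc]
              by_cases h : 0 ≤ c k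
              · simp [hs, h, abs_of_nonneg h]
              · simp only [hs, if_neg h]
                rw [abs_of_neg (lt_of_not_ge h)]; ring
      have habs : |sintegral ν g| ≤ 1 * tvNorm ν := abs_sintegral_le ν hgc hgbd zero_le_one
      rw [tvNorm_sum hxs, ← hval]
      calc sintegral ν g ≤ |sintegral ν g| := le_abs_self _
        _ ≤ 1 * tvNorm ν := habs
        _ = tvNorm ν := one_mul _
    exact le_antisymm (le_csInf ⟨_, hmemS⟩ hlb) (csInf_le (hbddS y) hmemS)
end

section
/- Let ν be a finite signed regular Borel measure on the open interval (0,1). If ∫_{(0,1)} (min{s,t} − st) dν(s) = 0 for every t ∈ (0,1), then ν is the zero measure. Consequently, the linear span of {K(·,t) : t ∈ (0,1)}, where K(s,t) := min{s,t} − st is the Brownian bridge kernel, is dense in C₀((0,1)). -/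
open MeasureTheory

namespace Stmt11
open Filter Finset

abbrev XX : Type := ↥(Set.Ioo (0:ℝ) 1)

lemma isCompact_pre {a b : ℝ} (ha : 0 < a) (hb : b < 1) :
    IsCompact (Subtype.val ⁻¹' Set.Icc a b : Set XX) := by
  rw [Topology.IsEmbedding.subtypeVal.isCompact_iff]
  have h : Subtype.val '' (Subtype.val ⁻¹' Set.Icc a b : Set XX)
      = Set.Ioo 0 1 ∩ Set.Icc a b := Subtype.image_preimage_coe _ _
  rw [h]
  have : Set.Ioo 0 1 ∩ Set.Icc a b = Set.Icc a b := by
    rw [Set.inter_eq_right]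
    intro x hx
    exact ⟨lt_of_lt_of_le ha hx.1, lt_of_le_of_lt hx.2 hb⟩
  rw [this]; exact isCompact_Icc

noncomputable def mkC0 (φ : XX → ℝ) (hc : Continuous φ) (C : ℝ) (hC : 0 ≤ C)
    (hb : ∀ s : XX, |φ s| ≤ C * min s.1 (1 - s.1)) : ZeroAtInftyContinuousMap XX ℝ where
  toFun := φ
  continuous_toFun := hc
  zero_at_infty' := by
    rw [NormedAddCommGroup.tendsto_nhds_zero]
    intro ε hε
    rw [Filter.hasBasis_cocompact.eventually_iff]
    have hd : 0 < ε / (C + 1) := by positivity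
    refine ⟨Subtype.val ⁻¹' Set.Icc (ε/(C+1)) (1 - ε/(C+1)), isCompact_pre hd (by linarith), ?_⟩
    intro s hs
    have h1 : ¬ (ε/(C+1) ≤ s.1 ∧ s.1 ≤ 1 - ε/(C+1)) := hs
    have h2 : min s.1 (1 - s.1) < ε/(C+1) := by
      rcases not_and_or.mp h1 with h | h
      · exact lt_of_le_of_lt (min_le_left _ _) (lt_of_not_ge h)
      · exact lt_of_le_of_lt (min_le_right _ _) (by linarith [lt_of_not_ge h])
    have h3 := hb s
    have h4 : C * (ε/(C+1)) < ε := by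
      rw [mul_div_assoc'] at *
      rw [div_lt_iff₀ (by linarith)]
      nlinarith
    have h5 : C * min s.1 (1 - s.1) ≤ C * (ε/(C+1)) :=
      mul_le_mul_of_nonneg_left h2.le hC
    simpa [Real.norm_eq_abs] using lt_of_le_of_lt h3 (lt_of_le_of_lt h5 h4)


lemma ker_cont (t : XX) : Continuous (fun s : XX => min s.1 t.1 - s.1 * t.1) := by
  fun_prop

lemma ker_bound (t : XX) (s : XX) :
    |min s.1 t.1 - s.1 * t.1| ≤ 1 * min s.1 (1 - s.1) := by
  obtain ⟨hs0, hs1⟩ := s.2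
  obtain ⟨ht0, ht1⟩ := t.2
  rw [one_mul, abs_le]
  have hm : 0 ≤ min s.1 (1 - s.1) := le_min hs0.le (by linarith)
  rcases le_total s.1 t.1 with h | h
  · rw [min_eq_left h]
    constructor
    · nlinarith [mul_nonneg hs0.le (by linarith : (0:ℝ) ≤ 1 - t.1)]
    · rcases min_cases s.1 (1 - s.1) with ⟨he, _⟩ | ⟨he, _⟩ <;> nlinarith
  · rw [min_eq_right h]
    constructor
    · nlinarith [mul_nonneg ht0.le (by linarith : (0:ℝ) ≤ 1 - s.1)]
    · rcases min_cases s.1 (1 - s.1) with ⟨he, _⟩ | ⟨he, _⟩ <;> nlinarith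

noncomputable def ker (t : XX) : ZeroAtInftyContinuousMap XX ℝ :=
  mkC0 (fun s => min s.1 t.1 - s.1 * t.1) (ker_cont t) 1 zero_le_one (ker_bound t)

@[simp] lemma ker_apply (t : XX) (s : XX) : ker t s = min s.1 t.1 - s.1 * t.1 := rfl

lemma cutoff_bound (n : ℕ) (s : XX) :
    |min ((n:ℝ) * min s.1 (1 - s.1)) 1| ≤ (n:ℝ) * min s.1 (1 - s.1) := by
  obtain ⟨hs0, hs1⟩ := s.2
  have hm : 0 ≤ min s.1 (1 - s.1) := le_min hs0.le (by linarith)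
  have h0 : 0 ≤ (n:ℝ) * min s.1 (1 - s.1) := by positivity
  rw [abs_le]
  exact ⟨by simp [le_min_iff]; constructor <;> [linarith; linarith], min_le_left _ _⟩

noncomputable def cutoff (n : ℕ) : ZeroAtInftyContinuousMap XX ℝ :=
  mkC0 (fun s => min ((n:ℝ) * min s.1 (1 - s.1)) 1) (by fun_prop) n (Nat.cast_nonneg n)
    (cutoff_bound n)

lemma cutoff_mem_Icc (n : ℕ) (s : XX) : cutoff n s ∈ Set.Icc (0:ℝ) 1 := by
  obtain ⟨hs0, hs1⟩ := s.2
  have hm : 0 ≤ min s.1 (1 - s.1) := le_min hs0.le (by linarith)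
  constructor
  · simp only [cutoff, mkC0]
    simp [le_min_iff]
    positivity
  · exact min_le_right _ _

lemma cutoff_tendsto (s : XX) : Tendsto (fun n => cutoff n s) atTop (nhds 1) := by
  obtain ⟨hs0, hs1⟩ := s.2
  have hm : 0 < min s.1 (1 - s.1) := lt_min hs0 (by linarith)
  have : ∀ᶠ n : ℕ in atTop, cutoff n s = 1 := by
    filter_upwards [eventually_ge_atTop ⌈1 / min s.1 (1 - s.1)⌉₊] with n hn
    have h1 : 1 / min s.1 (1 - s.1) ≤ (n:ℝ) := le_trans (Nat.le_ceil _) (by exact_mod_cast hn)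
    have h2 : 1 ≤ (n:ℝ) * min s.1 (1 - s.1) := by
      rw [div_le_iff₀ hm] at h1; linarith
    simp only [cutoff, mkC0]
    simpa [min_eq_right] using min_eq_right h2
  exact Tendsto.congr' (this.mono fun n h => h.symm) tendsto_const_nhds


lemma sumA (c : ℕ → ℝ) (h0 : c 0 = 0) : ∀ m : ℕ, ∑ j ∈ range (m+1), (j:ℝ) * (2*c j - c (j-1) - c (j+1))
    = (m+1) * c m - m * c (m+1) := by
  intro m
  induction m with
  | zero => simp [h0]
  | succ m ih =>
    rw [Finset.sum_range_succ, ih]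
    have h1 : m + 1 - 1 = m := rfl
    rw [h1]
    push_cast
    ring

lemma sumB (c : ℕ → ℝ) (h0 : c 0 = 0) :
    ∀ m : ℕ, ∑ j ∈ range (m+1), (2*c j - c (j-1) - c (j+1)) = c m - c (m+1) := by
  intro m
  induction m with
  | zero => simp [h0]
  | succ m ih =>
    rw [Finset.sum_range_succ, ih]
    have h1 : m + 1 - 1 = m := rfl
    rw [h1]
    ring

lemma sumMain (n i : ℕ) (hn : 0 < n) (hi : i < n) (c : ℕ → ℝ) (h0 : c 0 = 0)
    (hend : ∀ j, n ≤ j → c j = 0) (s : ℝ)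
    (hs1 : (i:ℝ)/n ≤ s) (hs2 : s ≤ ((i:ℝ)+1)/n) :
    ∑ j ∈ range (n+1), ((n:ℝ)*(2*c j - c (j-1) - c (j+1))) * (min s ((j:ℝ)/n) - s*((j:ℝ)/n))
      = c i * (1 - ((n:ℝ)*s - i)) + c (i+1) * ((n:ℝ)*s - i) := by
  have hn' : (0:ℝ) < n := by exact_mod_cast hn
  set t : ℕ → ℝ := fun j => 2*c j - c (j-1) - c (j+1) with ht
  have hsplit := Finset.sum_range_add_sum_Ico
    (fun j => ((n:ℝ) * t j) * (min s ((j:ℝ)/n) - s*((j:ℝ)/n)))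
    (show i+1 ≤ n+1 by omega)
  rw [← hsplit]
  -- piece 1
  have hp1 : ∑ j ∈ range (i+1), ((n:ℝ) * t j) * (min s ((j:ℝ)/n) - s*((j:ℝ)/n))
      = (1-s) * ∑ j ∈ range (i+1), (j:ℝ) * t j := by
    rw [Finset.mul_sum]
    refine Finset.sum_congr rfl fun j hj => ?_
    have hj' : j ≤ i := Nat.lt_succ_iff.mp (Finset.mem_range.mp hj)
    have hle : (j:ℝ)/n ≤ s := le_trans (by
      gcongr <;> exact_mod_cast hj') hs1
    rw [min_eq_right hle]
    field_simp
  -- piece 2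
  have hp2 : ∑ j ∈ Finset.Ico (i+1) (n+1), ((n:ℝ) * t j) * (min s ((j:ℝ)/n) - s*((j:ℝ)/n))
      = s * (n:ℝ) * ∑ j ∈ Finset.Ico (i+1) (n+1), t j
        - s * ∑ j ∈ Finset.Ico (i+1) (n+1), (j:ℝ) * t j := by
    rw [Finset.mul_sum, Finset.mul_sum, ← Finset.sum_sub_distrib]
    refine Finset.sum_congr rfl fun j hj => ?_
    have hj' : i+1 ≤ j := (Finset.mem_Ico.mp hj).1
    have hge : s ≤ (j:ℝ)/n := le_trans hs2 (by
      gcongr <;> exact_mod_cast hj')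
    rw [min_eq_left hge]
    field_simp
  have hIcoT : ∑ j ∈ Finset.Ico (i+1) (n+1), t j = c (i+1) - c i := by
    have h1 := Finset.sum_range_add_sum_Ico t (show i+1 ≤ n+1 by omega)
    have h2 := sumB c h0 n
    have h3 := sumB c h0 i
    have h4 : c n = 0 := hend n le_rfl
    have h5 : c (n+1) = 0 := hend (n+1) (by omega)
    rw [h3] at h1
    rw [h2, h4, h5] at h1
    linarith
  have hIcoJT : ∑ j ∈ Finset.Ico (i+1) (n+1), (j:ℝ) * t j = -((i+1) * c i - i * c (i+1)) := by
    have h1 := Finset.sum_range_add_sum_Ico (fun j => (j:ℝ) * t j) (show i+1 ≤ n+1 by omega)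
    have h2 := sumA c h0 n
    have h3 := sumA c h0 i
    have h4 : c n = 0 := hend n le_rfl
    have h5 : c (n+1) = 0 := hend (n+1) (by omega)
    rw [h3] at h1
    rw [h2, h4, h5] at h1
    push_cast at h1 ⊢
    linarith
  rw [hp1, hp2, hIcoT, hIcoJT, sumA c h0 i]
  push_cast
  ring


noncomputable def evalHom (s : XX) : ZeroAtInftyContinuousMap XX ℝ →+ ℝ where
  toFun g := g s
  map_zero' := rfl
  map_add' _ _ := rfl

def genSet : Set (ZeroAtInftyContinuousMap XX ℝ) :=
  {f | ∃ t : XX, ∀ s, f s = min s.1 t.1 - s.1 * t.1}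

set_option maxHeartbeats 1000000 in
theorem dense_span :
    Dense (↑(Submodule.span ℝ genSet) : Set (ZeroAtInftyContinuousMap XX ℝ)) := by
  classical
  rw [Metric.dense_iff]
  intro f r hr
  set ε := r/2 with hεdef
  have hε0 : 0 < ε := by positivity
  -- boundary control
  obtain ⟨K, hK, hout⟩ := Filter.hasBasis_cocompact.eventually_iff.mp
    ((NormedAddCommGroup.tendsto_nhds_zero.mp f.zero_at_infty') ε hε0)
  set pt : XX := ⟨1/2, by norm_num⟩ with hptdef
  have hK' : IsCompact (K ∪ {pt} : Set XX) := hK.union isCompact_singleton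
  have hne : (K ∪ {pt} : Set XX).Nonempty := ⟨pt, Or.inr rfl⟩
  have hcont : ContinuousOn (fun s : XX => min s.1 (1 - s.1)) (K ∪ {pt}) := by fun_prop
  obtain ⟨z, hz, hzmin⟩ := hK'.exists_isMinOn hne hcont
  set η := min z.1 (1 - z.1) with hηdef
  have hη0 : 0 < η := lt_min z.2.1 (by linarith [z.2.2])
  have hbd : ∀ s : XX, min s.1 (1 - s.1) < η → ‖f s‖ < ε := by
    intro s hs
    apply hout
    intro hsK
    exact absurd (isMinOn_iff.mp hzmin s (Or.inl hsK)) (not_le.mpr hs)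
  -- uniform continuity
  obtain ⟨δ, hδ0, hδ⟩ := Metric.uniformContinuous_iff.mp
    (ZeroAtInftyContinuousMap.uniformContinuous f) ε hε0
  -- choose n
  obtain ⟨m, hm⟩ := exists_nat_one_div_lt (lt_min hδ0 hη0)
  set n : ℕ := m + 1 with hndef
  have hn0 : 0 < n := Nat.succ_pos m
  have hnR : (0:ℝ) < n := by exact_mod_cast hn0
  have hn : 1/(n:ℝ) < min δ η := by
    have : ((m:ℝ) + 1) = (n:ℝ) := by rw [hndef]; push_cast; ring
    rwa [this] at hm
  have hnδ : 1/(n:ℝ) < δ := lt_of_lt_of_le hn (min_le_left _ _)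
  have hnη : 1/(n:ℝ) < η := lt_of_lt_of_le hn (min_le_right _ _)
  set c : ℕ → ℝ := fun j => if h : (j:ℝ)/n ∈ Set.Ioo (0:ℝ) 1 then f ⟨(j:ℝ)/n, h⟩ else 0
    with hcdef
  set kj : ℕ → ZeroAtInftyContinuousMap XX ℝ :=
    fun j => if h : (j:ℝ)/n ∈ Set.Ioo (0:ℝ) 1 then ker ⟨(j:ℝ)/n, h⟩ else 0 with hkdef
  have hc0 : c 0 = 0 := by
    simp only [hcdef]
    simp
  have hcend : ∀ j, n ≤ j → c j = 0 := by
    intro j hj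
    have h : ¬ ((j:ℝ)/n ∈ Set.Ioo (0:ℝ) 1) := by
      rw [Set.mem_Ioo]
      push_neg
      intro _
      rw [le_div_iff₀ hnR, one_mul]
      exact_mod_cast hj
    simp only [hcdef]
    exact dif_neg h
  have hdiv01 : ∀ j, j ≤ n → ¬ ((j:ℝ)/n ∈ Set.Ioo (0:ℝ) 1) →
      (j:ℝ)/n = 0 ∨ (j:ℝ)/n = 1 := by
    intro j hj h
    have hj0 : (0:ℝ) ≤ (j:ℝ)/n := by positivity
    have hj1 : (j:ℝ)/n ≤ 1 := by
      rw [div_le_one hnR]; exact_mod_cast hj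
    rw [Set.mem_Ioo] at h
    push_neg at h
    rcases lt_or_eq_of_le hj0 with h0 | h0
    · right; exact le_antisymm hj1 (h h0)
    · left; exact h0.symm
  have hkapply : ∀ j, j ≤ n → ∀ s : XX,
      kj j s = min s.1 ((j:ℝ)/n) - s.1 * ((j:ℝ)/n) := by
    intro j hj s
    simp only [hkdef]
    by_cases h : (j:ℝ)/n ∈ Set.Ioo (0:ℝ) 1
    · rw [dif_pos h]; rfl
    · rw [dif_neg h]
      rcases hdiv01 j hj h with h0 | h0 <;> rw [h0]
      · rw [min_eq_right s.2.1.le]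
        simp
      · rw [min_eq_left s.2.2.le]
        simp
  set g : ZeroAtInftyContinuousMap XX ℝ :=
    ∑ j ∈ range (n+1), ((n:ℝ)*(2*c j - c (j-1) - c (j+1))) • kj j with hgdef
  have hgmem : g ∈ Submodule.span ℝ genSet := by
    apply Submodule.sum_mem
    intro j _
    apply Submodule.smul_mem
    simp only [hkdef]
    by_cases h : (j:ℝ)/n ∈ Set.Ioo (0:ℝ) 1
    · rw [dif_pos h]
      exact Submodule.subset_span ⟨⟨(j:ℝ)/n, h⟩, fun s => rfl⟩
    · rw [dif_neg h]
      exact Submodule.zero_mem _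
  have hgval : ∀ s : XX, g s = ∑ j ∈ range (n+1),
      ((n:ℝ)*(2*c j - c (j-1) - c (j+1))) * (min s.1 ((j:ℝ)/n) - s.1*((j:ℝ)/n)) := by
    intro s
    rw [show (g s) = evalHom s g from rfl, hgdef, map_sum]
    refine Finset.sum_congr rfl fun j hj => ?_
    have hj' : j ≤ n := by
      have := Finset.mem_range.mp hj; omega
    have h1 : evalHom s (((n:ℝ)*(2*c j - c (j-1) - c (j+1))) • kj j)
        = ((n:ℝ)*(2*c j - c (j-1) - c (j+1))) * (kj j s) := by
      rfl
    rw [h1, hkapply j hj' s]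
  -- closeness of grid values
  have hclose : ∀ j, j ≤ n → ∀ s : XX, |s.1 - (j:ℝ)/n| ≤ 1/n → |f s - c j| ≤ ε := by
    intro j hj s hd
    by_cases h : (j:ℝ)/n ∈ Set.Ioo (0:ℝ) 1
    · have hcj : c j = f ⟨(j:ℝ)/n, h⟩ := by simp only [hcdef]; exact dif_pos h
      rw [hcj]
      have hdist : dist s (⟨(j:ℝ)/n, h⟩ : XX) < δ := by
        rw [Subtype.dist_eq, Real.dist_eq]
        exact lt_of_le_of_lt hd hnδ
      have := hδ hdist
      rw [Real.dist_eq] at this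
      exact this.le
    · have hcj : c j = 0 := by simp only [hcdef]; exact dif_neg h
      rw [hcj, sub_zero]
      have hmin : min s.1 (1 - s.1) < η := by
        rcases hdiv01 j hj h with h0 | h0
        · rw [h0, sub_zero] at hd
          have hle : s.1 ≤ 1/n := (abs_le.mp hd).2
          exact lt_of_le_of_lt (le_trans (min_le_left _ _) hle) hnη
        · rw [h0] at hd
          have hle : 1 - s.1 ≤ 1/n := by
            have := (abs_le.mp hd).1; linarith
          exact lt_of_le_of_lt (le_trans (min_le_right _ _) hle) hnη
      have := hbd s hmin
      rw [Real.norm_eq_abs] at this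
      exact this.le
  -- pointwise bound
  have hpt : ∀ s : XX, |f s - g s| ≤ ε := by
    intro s
    set i := ⌊(n:ℝ) * s.1⌋₊ with hidef
    have hns0 : 0 ≤ (n:ℝ) * s.1 := mul_nonneg hnR.le s.2.1.le
    have hi1 : (i:ℝ) ≤ (n:ℝ) * s.1 := Nat.floor_le hns0
    have hi2 : (n:ℝ) * s.1 < i + 1 := Nat.lt_floor_add_one _
    have hin : i < n := by
      have h1 : (n:ℝ)*s.1 < (n:ℝ) := by nlinarith [s.2.2]
      exact (Nat.floor_lt hns0).mpr h1
    have hs1 : (i:ℝ)/n ≤ s.1 := by rw [div_le_iff₀ hnR]; linarith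
    have hs2 : s.1 ≤ ((i:ℝ)+1)/n := by rw [le_div_iff₀ hnR]; linarith
    have hval := sumMain n i hn0 hin c hc0 hcend s.1 hs1 hs2
    rw [hgval s, hval]
    have he1 : ((i:ℝ)+1)/n = (i:ℝ)/n + 1/n := by ring
    rw [he1] at hs2
    have hpos : (0:ℝ) < 1/n := by positivity
    have hb1 : |f s - c i| ≤ ε := by
      apply hclose i (by omega) s
      rw [abs_le]
      constructor <;> linarith
    have hb2 : |f s - c (i+1)| ≤ ε := by
      apply hclose (i+1) (by omega) s
      have hcast : ((i+1:ℕ):ℝ) = (i:ℝ)+1 := by push_cast; ring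
      rw [abs_le, hcast]
      constructor <;> linarith
    have hθ0 : 0 ≤ (n:ℝ)*s.1 - i := by linarith
    have hθ1 : (n:ℝ)*s.1 - i ≤ 1 := by linarith
    rw [abs_le] at hb1 hb2 ⊢
    obtain ⟨hb1a, hb1b⟩ := hb1
    obtain ⟨hb2a, hb2b⟩ := hb2
    constructor <;> nlinarith
  refine ⟨g, ?_, hgmem⟩
  rw [Metric.mem_ball, dist_eq_norm]
  have hnorm : ‖g - f‖ ≤ ε := by
    rw [← ZeroAtInftyContinuousMap.norm_toBCF_eq_norm]
    apply (BoundedContinuousFunction.norm_le hε0.le).mpr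
    intro x
    have hx : (g - f).toBCF x = g x - f x := rfl
    rw [hx, Real.norm_eq_abs, abs_sub_comm]
    exact hpt x
  linarith


lemma c0_integrable (g : ZeroAtInftyContinuousMap XX ℝ) (κ : Measure XX) [IsFiniteMeasure κ] :
    Integrable (⇑g) κ := g.toBCF.integrable κ

lemma integral_c0_continuous (κ : Measure XX) [IsFiniteMeasure κ] :
    Continuous (fun g : ZeroAtInftyContinuousMap XX ℝ => ∫ x, g x ∂κ) := by
  apply LipschitzWith.continuous (K := (κ Set.univ).toReal.toNNReal)
  apply LipschitzWith.of_dist_le_mul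
  intro a b
  rw [Real.dist_eq, dist_eq_norm]
  have h1 : ∫ x, a x ∂κ - ∫ x, b x ∂κ = ∫ x, (a x - b x) ∂κ :=
    (integral_sub (c0_integrable a κ) (c0_integrable b κ)).symm
  rw [h1]
  have h2 : ∀ x, ‖a x - b x‖ ≤ ‖a - b‖ := by
    intro x
    have h3 := (a - b).toBCF.norm_coe_le_norm x
    rwa [ZeroAtInftyContinuousMap.norm_toBCF_eq_norm] at h3
  calc |∫ x, (a x - b x) ∂κ| ≤ ‖a - b‖ * (κ Set.univ).toReal := by
        rw [← Real.norm_eq_abs]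
        exact norm_integral_le_of_norm_le_const (Filter.Eventually.of_forall h2)
    _ ≤ ((κ Set.univ).toReal.toNNReal : ℝ) * ‖a - b‖ := by
        rw [Real.coe_toNNReal _ ENNReal.toReal_nonneg, mul_comm]

set_option maxHeartbeats 1000000 in
theorem measure_eq (μ ρ : Measure XX) [IsFiniteMeasure μ] [IsFiniteMeasure ρ]
    (h : ∀ t : XX, ∫ s, (min s.1 t.1 - s.1 * t.1) ∂μ = ∫ s, (min s.1 t.1 - s.1 * t.1) ∂ρ) :
    μ = ρ := by
  -- Step 1: all C₀ functions
  have hC0 : ∀ g : ZeroAtInftyContinuousMap XX ℝ, ∫ x, g x ∂μ = ∫ x, g x ∂ρ := by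
    set T : Submodule ℝ (ZeroAtInftyContinuousMap XX ℝ) :=
      { carrier := {g | ∫ x, g x ∂μ = ∫ x, g x ∂ρ}
        add_mem' := by
          intro a b ha hb
          simp only [Set.mem_setOf_eq, ZeroAtInftyContinuousMap.coe_add, Pi.add_apply] at *
          rw [integral_add (c0_integrable a μ) (c0_integrable b μ),
            integral_add (c0_integrable a ρ) (c0_integrable b ρ), ha, hb]
        zero_mem' := by simp
        smul_mem' := by
          intro a g hg
          simp only [Set.mem_setOf_eq, ZeroAtInftyContinuousMap.coe_smul, Pi.smul_apply] at *
          rw [integral_smul, integral_smul, hg] } with hT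
    have hclosed : IsClosed (T : Set (ZeroAtInftyContinuousMap XX ℝ)) := by
      have heq : (T : Set (ZeroAtInftyContinuousMap XX ℝ)) =
          (fun g : ZeroAtInftyContinuousMap XX ℝ => ∫ x, g x ∂μ - ∫ x, g x ∂ρ) ⁻¹' {0} := by
        ext g
        simp only [Set.mem_preimage, Set.mem_singleton_iff, sub_eq_zero]
        rfl
      rw [heq]
      exact IsClosed.preimage ((integral_c0_continuous μ).sub (integral_c0_continuous ρ))
        isClosed_singleton
    have hsub : genSet ⊆ (T : Set (ZeroAtInftyContinuousMap XX ℝ)) := by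
      rintro g ⟨t, htg⟩
      have hg : ⇑g = fun s : XX => min s.1 t.1 - s.1 * t.1 := funext htg
      show ∫ x, g x ∂μ = ∫ x, g x ∂ρ
      rw [hg]
      exact h t
    have hspan : ((Submodule.span ℝ genSet : Submodule ℝ (ZeroAtInftyContinuousMap XX ℝ)) :
        Set (ZeroAtInftyContinuousMap XX ℝ)) ⊆ (T : Set (ZeroAtInftyContinuousMap XX ℝ)) :=
      SetLike.coe_subset_coe.mpr (Submodule.span_le.mpr hsub)
    have huniv : (Set.univ : Set (ZeroAtInftyContinuousMap XX ℝ)) ⊆ (T : Set (ZeroAtInftyContinuousMap XX ℝ)) := by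
      rw [← dense_span.closure_eq]
      exact closure_minimal hspan hclosed
    exact fun g => huniv (Set.mem_univ g)
  -- Step 2: all bounded continuous functions
  have hBC : ∀ F : BoundedContinuousFunction XX ℝ, ∫ x, F x ∂μ = ∫ x, F x ∂ρ := by
    intro F
    let Fn : ℕ → ZeroAtInftyContinuousMap XX ℝ := fun k =>
      mkC0 (fun s => F s * cutoff k s) (F.continuous.mul (map_continuous (cutoff k)))
        (‖F‖ * k) (by positivity)
        (fun s => by
          have h1 : |cutoff k s| ≤ (k:ℝ) * min s.1 (1 - s.1) := cutoff_bound k s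
          have h2 : |F s| ≤ ‖F‖ := F.norm_coe_le_norm s
          calc |F s * cutoff k s| = |F s| * |cutoff k s| := abs_mul _ _
            _ ≤ ‖F‖ * ((k:ℝ) * min s.1 (1 - s.1)) :=
                mul_le_mul h2 h1 (abs_nonneg _) (norm_nonneg _)
            _ = ‖F‖ * k * min s.1 (1 - s.1) := by ring)
    have hlim : ∀ (κ : Measure XX) [IsFiniteMeasure κ],
        Filter.Tendsto (fun k => ∫ x, (Fn k) x ∂κ) atTop (nhds (∫ x, F x ∂κ)) := by
      intro κ _
      apply tendsto_integral_of_dominated_convergence (fun _ => ‖F‖)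
      · intro k
        exact (map_continuous (Fn k)).aestronglyMeasurable
      · exact integrable_const _
      · intro k
        refine Filter.Eventually.of_forall fun x => ?_
        have h1 : |cutoff k x| ≤ 1 := by
          have h2 := cutoff_mem_Icc k x
          rw [abs_le]
          exact ⟨by linarith [h2.1], h2.2⟩
        have h3 : (Fn k) x = F x * cutoff k x := rfl
        rw [h3, Real.norm_eq_abs, abs_mul]
        calc |F x| * |cutoff k x| ≤ ‖F‖ * 1 :=
              mul_le_mul (F.norm_coe_le_norm x) h1 (abs_nonneg _) (norm_nonneg _)
          _ = ‖F‖ := mul_one _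
      · refine Filter.Eventually.of_forall fun x => ?_
        have h4 := (cutoff_tendsto x).const_mul (F x)
        rw [mul_one] at h4; exact h4
    have h1 := hlim μ
    have h2 := hlim ρ
    have h3 : (fun k => ∫ x, (Fn k) x ∂μ) = fun k => ∫ x, (Fn k) x ∂ρ :=
      funext fun k => hC0 (Fn k)
    rw [h3] at h1
    exact tendsto_nhds_unique h1 h2
  -- Step 3: conclude
  apply ext_of_forall_lintegral_eq_of_IsFiniteMeasure
  intro f
  have hlip : LipschitzWith 1 ((↑) : NNReal → ℝ) :=
    Isometry.lipschitz (fun x y => rfl)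
  have hreal := hBC (BoundedContinuousFunction.comp _ hlip f)
  have hμ := BoundedContinuousFunction.toReal_lintegral_coe_eq_integral f μ
  have hρ := BoundedContinuousFunction.toReal_lintegral_coe_eq_integral f ρ
  have hfin1 : (∫⁻ x, (f x : ENNReal) ∂μ) ≠ ⊤ :=
    (BoundedContinuousFunction.lintegral_lt_top_of_nnreal μ f).ne
  have hfin2 : (∫⁻ x, (f x : ENNReal) ∂ρ) ≠ ⊤ :=
    (BoundedContinuousFunction.lintegral_lt_top_of_nnreal ρ f).ne
  rw [← ENNReal.toReal_eq_toReal_iff' hfin1 hfin2, hμ, hρ]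
  exact hreal

end Stmt11


/-- if a finite signed regular Borel measure `ν` on `(0,1)` satisfies
`∫ (min{s,t} − st) dν(s) = 0` for every `t ∈ (0,1)`, then `ν = 0`; consequently the span of
the sections `K(·,t) = min{·,t} − (·)t` of the Brownian bridge kernel is dense in
`C₀((0,1))`. -/
theorem stmt11 (ν : SignedMeasure ↥(Set.Ioo (0:ℝ) 1))
    (hreg : ν.totalVariation.Regular)
    (hν : ∀ t : ↥(Set.Ioo (0:ℝ) 1),
      sintegral ν (fun s => min s.1 t.1 - s.1 * t.1) = 0) :
    ν = 0 ∧
    Dense (↑(Submodule.span ℝ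
      {f : ZeroAtInftyContinuousMap ↥(Set.Ioo (0:ℝ) 1) ℝ |
        ∃ t : ↥(Set.Ioo (0:ℝ) 1), ∀ s, f s = min s.1 t.1 - s.1 * t.1}) :
      Set (ZeroAtInftyContinuousMap ↥(Set.Ioo (0:ℝ) 1) ℝ)) := by
  refine ⟨?_, Stmt11.dense_span⟩
  have hμρ : ν.toJordanDecomposition.posPart = ν.toJordanDecomposition.negPart := by
    apply Stmt11.measure_eq
    intro t
    have h1 := hν t
    unfold sintegral at h1
    linarith
  have h2 := ν.toSignedMeasure_toJordanDecomposition
  have h3 : ν.toJordanDecomposition.toSignedMeasure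
      = ν.toJordanDecomposition.posPart.toSignedMeasure
        - ν.toJordanDecomposition.negPart.toSignedMeasure := rfl
  have h4 : ∀ (μ₁ μ₂ : Measure ↥(Set.Ioo (0:ℝ) 1)) [IsFiniteMeasure μ₁] [IsFiniteMeasure μ₂],
      μ₁ = μ₂ → μ₁.toSignedMeasure = μ₂.toSignedMeasure := by
    intro μ₁ μ₂ _ _ h
    subst h
    rfl
  conv_lhs => rw [← h2]
  rw [h3, h4 _ _ hμρ, sub_self]
end

section
/- Assume s ≥ 1 and all eigenvalues λ_j are positive. Set φ := Σ_j λ_j^{s−1} a_j φ_j. Then φ ∈ L²_{ρ_X} with ‖φ‖_{L²_{ρ_X}} ≤ λ₁^{s−1} ‖h‖_{L²_{ρ_X}}, f_ρ = L_K φ, and the measure μ := φ dρ_X ∈ M(X) satisfies f_ρ(x) = ∫_X K(t,x) dμ(t) for ρ_X-almost every x and ‖μ‖ = ‖φ‖_{L¹_{ρ_X}} ≤ λ₁^{s−1} ‖h‖_{L²_{ρ_X}}. Consequently, for every λ > 0, D(λ, f_ρ) := λ‖μ‖ ≤ λ λ₁^{s−1} ‖h‖_{L²_{ρ_X}}. 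-/
open MeasureTheory
open scoped RealInnerProductSpace ENNReal

lemma aux_coeff {E : Type*} [NormedAddCommGroup E] [InnerProductSpace ℝ E]
    (φ : ℕ → E) (hON : Orthonormal ℝ φ) (c : ℕ → ℝ) (x : E)
    (hx : HasSum (fun j => c j • φ j) x) (j : ℕ) : ⟪φ j, x⟫ = c j := by
  have h1 : HasSum (fun i => ⟪φ j, c i • φ i⟫) ⟪φ j, x⟫ := hx.mapL (innerSL ℝ (φ j))
  have h2 : (fun i => ⟪φ j, c i • φ i⟫) = fun i => if i = j then c j else 0 := by
    funext i
    rw [real_inner_smul_right, orthonormal_iff_ite.mp hON]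
    rcases eq_or_ne i j with rfl | hij
    · simp
    · simp [Ne.symm hij, hij]
  rw [h2] at h1
  exact h1.unique (hasSum_ite_eq j (c j))

lemma aux_parseval {E : Type*} [NormedAddCommGroup E] [InnerProductSpace ℝ E] [CompleteSpace E]
    (φ : ℕ → E) (b : HilbertBasis ℕ ℝ E) (hb : ⇑b = φ) (hON : Orthonormal ℝ φ)
    (a : ℕ → ℝ) (h : E) (hh : HasSum (fun j => a j • φ j) h) :
    HasSum (fun i => a i * a i) (‖h‖ ^ 2) := by
  have hsum := b.hasSum_inner_mul_inner h h
  rw [hb] at hsum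
  have heq : (fun i => ⟪h, φ i⟫ * ⟪φ i, h⟫) = fun i => a i * a i := by
    funext i
    have h1 : ⟪φ i, h⟫ = a i := aux_coeff φ hON a h hh i
    have h2 : ⟪h, φ i⟫ = a i := by rw [← h1]; exact (real_inner_comm _ _).symm
    rw [h1, h2]
  rw [heq, real_inner_self_eq_norm_sq] at hsum
  exact hsum

lemma aux_exists {E : Type*} [NormedAddCommGroup E] [InnerProductSpace ℝ E] [CompleteSpace E]
    (φ : ℕ → E) (hON : Orthonormal ℝ φ)
    (hcomplete : (Submodule.span ℝ (Set.range φ)).topologicalClosure = ⊤)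
    (a c : ℕ → ℝ) (h : E) (hh : HasSum (fun j => a j • φ j) h)
    (M : ℝ) (hM : 0 ≤ M) (hca : ∀ j, c j * c j ≤ (M * M) * (a j * a j)) :
    ∃ x : E, HasSum (fun j => c j • φ j) x ∧ ‖x‖ ≤ M * ‖h‖ := by
  let b : HilbertBasis ℕ ℝ E := HilbertBasis.mk hON (le_of_eq hcomplete.symm)
  have hb : ⇑b = φ := HilbertBasis.coe_mk _ _
  have hsum_h := aux_parseval φ b hb hON a h hh
  have hsa : Summable (fun i => a i * a i) := hsum_h.summable
  have hsc : Summable (fun i => ‖c i‖ ^ (2 : ℝ≥0∞).toReal) := by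
    have heq : (fun i => ‖c i‖ ^ (2 : ℝ≥0∞).toReal) = fun i => c i * c i := by
      funext i
      rw [show ((2 : ℝ≥0∞)).toReal = ((2:ℕ):ℝ) by norm_num, Real.rpow_natCast]
      simp [sq, Real.norm_eq_abs, abs_mul_abs_self]
    rw [heq]
    exact (hsa.mul_left (M * M)).of_nonneg_of_le (fun i => mul_self_nonneg _) hca
  let cl : lp (fun _ : ℕ => ℝ) 2 := ⟨c, memℓp_gen hsc⟩
  have hsum_x : HasSum (fun j => c j • φ j) (b.repr.symm cl) := by
    have := b.hasSum_repr_symm cl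
    rw [hb] at this
    exact this
  refine ⟨b.repr.symm cl, hsum_x, ?_⟩
  have hsx := aux_parseval φ b hb hON c _ hsum_x
  have hle : ‖b.repr.symm cl‖ ^ 2 ≤ (M * M) * ‖h‖ ^ 2 :=
    hasSum_le hca hsx (hsum_h.mul_left (M * M))
  nlinarith [norm_nonneg (b.repr.symm cl), norm_nonneg h, mul_nonneg hM (norm_nonneg h)]

lemma aux_tv {X : Type*} [MeasurableSpace X] (ρX : Measure X) [IsFiniteMeasure ρX]
    (f : X → ℝ) (hf : Integrable f ρX) :
    tvNorm (ρX.withDensityᵥ f) = ∫ x, |f x| ∂ρX := by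
  set f' := hf.aestronglyMeasurable.mk f with hf'
  have hae : f =ᵐ[ρX] f' := hf.aestronglyMeasurable.ae_eq_mk
  have hf'i : Integrable f' ρX := hf.congr hae
  have hmeas : Measurable f' := hf.aestronglyMeasurable.stronglyMeasurable_mk.measurable
  rw [WithDensityᵥEq.congr_ae hae]
  have hJ := SignedMeasure.toJordanDecomposition_eq_of_eq_add_withDensity
      (s := ρX.withDensityᵥ f') (t := 0) (μ := ρX) hmeas hf'i
      VectorMeasure.MutuallySingular.zero_left (by rw [zero_add])
  have htv : SignedMeasure.totalVariation (ρX.withDensityᵥ f') =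
      (ρX.withDensity fun x => ENNReal.ofReal (f' x)) +
      (ρX.withDensity fun x => ENNReal.ofReal (-f' x)) := by
    rw [SignedMeasure.totalVariation, hJ]
    simp [SignedMeasure.toJordanDecomposition_zero, JordanDecomposition.zero_posPart,
      JordanDecomposition.zero_negPart]
  have hpt : ∀ r : ℝ, ENNReal.ofReal r + ENNReal.ofReal (-r) = ‖r‖ₑ := by
    intro r
    rcases le_total 0 r with hr | hr
    · rw [show ENNReal.ofReal (-r) = 0 from ENNReal.ofReal_of_nonpos (by linarith), add_zero,
        ← ofReal_norm, Real.norm_eq_abs, abs_of_nonneg hr]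
    · rw [show ENNReal.ofReal r = 0 from ENNReal.ofReal_of_nonpos hr, zero_add,
        ← ofReal_norm, Real.norm_eq_abs, abs_of_nonpos hr]
  have hfin : tvNorm (ρX.withDensityᵥ f') = ∫ x, |f' x| ∂ρX := by
    rw [tvNorm]
    rw [htv]
    rw [Measure.add_apply, withDensity_apply _ MeasurableSet.univ,
      withDensity_apply _ MeasurableSet.univ, Measure.restrict_univ,
      ← lintegral_add_left (by measurability)]
    simp_rw [hpt]
    rw [← integral_norm_eq_lintegral_enorm hf'i.aestronglyMeasurable]
    simp [Real.norm_eq_abs]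
  rw [hfin]
  exact integral_congr_ae (hae.fun_comp abs).symm

theorem stmt13 {X : Type*} [MetricSpace X] [CompactSpace X]
    [MeasurableSpace X] [BorelSpace X]
    (ρX : Measure X) [IsProbabilityMeasure ρX]
    (K : X → X → ℝ) (hKcont : Continuous fun p : X × X => K p.1 p.2)
    (hKsymm : ∀ x t, K x t = K t x)
    (hKpsd : ∀ (n : ℕ) (z : Fin n → X) (c : Fin n → ℝ),
      0 ≤ ∑ i, ∑ j, c i * c j * K (z i) (z j))
    (φ : ℕ → Lp ℝ 2 ρX) (hON : Orthonormal ℝ φ)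
    (hcomplete : (Submodule.span ℝ (Set.range φ)).topologicalClosure = ⊤)
    (lam : ℕ → ℝ) (hpos : ∀ j, 0 < lam j) (hdecr : ∀ j, lam (j + 1) ≤ lam j)
    (heig : ∀ j, ∀ᵐ x ∂ρX, (∫ t, K t x * (φ j) t ∂ρX) = lam j * (φ j) x)
    (s : ℝ) (hs : 1 ≤ s)
    (a : ℕ → ℝ) (h : Lp ℝ 2 ρX) (hh : HasSum (fun j => a j • φ j) h)
    (fρ : Lp ℝ 2 ρX) (hfρ : HasSum (fun j => (lam j ^ s * a j) • φ j) fρ) :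
    ∃ ph : Lp ℝ 2 ρX,
      HasSum (fun j => (lam j ^ (s - 1) * a j) • φ j) ph ∧
      ‖ph‖ ≤ lam 0 ^ (s - 1) * ‖h‖ ∧
      (∀ᵐ x ∂ρX, fρ x = ∫ t, K t x * ph t ∂ρX) ∧
      tvNorm (ρX.withDensityᵥ ph) = ∫ x, |ph x| ∂ρX ∧
      tvNorm (ρX.withDensityᵥ ph) ≤ lam 0 ^ (s - 1) * ‖h‖ ∧
      ∀ lamreg : ℝ, 0 < lamreg →
        lamreg * tvNorm (ρX.withDensityᵥ ph) ≤ lamreg * (lam 0 ^ (s - 1) * ‖h‖) := by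
  classical
  set M : ℝ := lam 0 ^ (s - 1) with hMdef
  have hM0 : 0 ≤ M := Real.rpow_nonneg (hpos 0).le _
  have hlam0 : ∀ j, lam j ≤ lam 0 := by
    intro j
    induction j with
    | zero => exact le_rfl
    | succ n ih => exact (hdecr n).trans ih
  set c : ℕ → ℝ := fun j => lam j ^ (s - 1) * a j with hcdef
  have hca : ∀ j, c j * c j ≤ (M * M) * (a j * a j) := by
    intro j
    have h1 : 0 ≤ lam j ^ (s - 1) := Real.rpow_nonneg (hpos j).le _
    have h2 : lam j ^ (s - 1) ≤ M := Real.rpow_le_rpow (hpos j).le (hlam0 j) (by linarith)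
    simp only [hcdef]
    nlinarith [mul_nonneg (sub_nonneg.mpr (mul_le_mul h2 h2 h1 hM0)) (mul_self_nonneg (a j))]
  obtain ⟨ph, hsum_ph, hnorm⟩ := aux_exists φ hON hcomplete a c h hh M hM0 hca
  -- helper: L² inner products as integrals
  have hinnerL2 : ∀ u v : Lp ℝ 2 ρX, ⟪u, v⟫ = ∫ x, u x * v x ∂ρX := by
    intro u v
    rw [MeasureTheory.L2.inner_def]
    simp [RCLike.inner_apply]
    exact integral_congr_ae (ae_of_all _ fun x => mul_comm _ _)
  -- integrability of L² functions
  have hint : ∀ u : Lp ℝ 2 ρX, Integrable (⇑u) ρX :=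
    fun u => (Lp.memLp u).integrable one_le_two
  -- bound on K
  obtain ⟨C, hC⟩ : ∃ C, ∀ t x : X, |K t x| ≤ C := by
    obtain ⟨C, hC⟩ := isCompact_univ.exists_bound_of_continuousOn
      (s := (Set.univ : Set (X × X))) hKcont.continuousOn
    exact ⟨C, fun t x => hC (t, x) (Set.mem_univ _)⟩
  -- the function g = L_K ph
  set g : X → ℝ := fun x => ∫ t, K t x * ph t ∂ρX with hgdef
  have hgcont : Continuous g := by
    apply continuous_of_dominated (bound := fun t => C * |(ph : X → ℝ) t|)
    · intro x
      exact ((hKcont.comp (continuous_id.prodMk (continuous_const (y := x)))).aestronglyMeasurable.mul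
        (Lp.aestronglyMeasurable ph))
    · intro x
      filter_upwards with t
      rw [Real.norm_eq_abs, abs_mul]
      exact mul_le_mul_of_nonneg_right (hC t x) (abs_nonneg _)
    · exact (hint ph).abs.const_mul C
    · filter_upwards with t
      exact (hKcont.comp ((continuous_const (y := t)).prodMk continuous_id)).mul continuous_const
  have hgint : ∀ x, Integrable (fun t => K t x * ph t) ρX := by
    intro x
    apply ((hint ph).abs.const_mul C).mono'
      ((hKcont.comp (continuous_id.prodMk (continuous_const (y := x)))).aestronglyMeasurable.mul
        (Lp.aestronglyMeasurable ph))
    filter_upwards with t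
    show ‖K t x * (ph : X → ℝ) t‖ ≤ C * |(ph : X → ℝ) t|
    rw [Real.norm_eq_abs, abs_mul]
    exact mul_le_mul_of_nonneg_right (hC t x) (abs_nonneg _)
  have hgb : ∀ x, ‖g x‖ ≤ C * ∫ t, |ph t| ∂ρX := by
    intro x
    rw [Real.norm_eq_abs]
    calc |∫ t, K t x * ph t ∂ρX| = ‖∫ t, K t x * ph t ∂ρX‖ := (Real.norm_eq_abs _).symm
      _ ≤ ∫ t, ‖K t x * ph t‖ ∂ρX := norm_integral_le_integral_norm _
      _ ≤ ∫ t, C * |ph t| ∂ρX := by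
          refine integral_mono (hgint x).norm ((hint ph).abs.const_mul C) fun t => ?_
          rw [Real.norm_eq_abs, abs_mul]
          exact mul_le_mul_of_nonneg_right (hC t x) (abs_nonneg _)
      _ = C * ∫ t, |ph t| ∂ρX := integral_const_mul C _
  have hgmem : MemLp g 2 ρX :=
    MemLp.of_bound hgcont.aestronglyMeasurable _ (ae_of_all _ hgb)
  set gL : Lp ℝ 2 ρX := hgmem.toLp g with hgL
  have hgLae : ⇑gL =ᵐ[ρX] g := hgmem.coeFn_toLp
  -- Fourier coefficients of gL
  have hinner : ∀ j, ⟪φ j, gL⟫ = lam j ^ s * a j := by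
    intro j
    have hprod : Integrable (fun z : X × X => (φ j) z.1 * (K z.2 z.1 * ph z.2)) (ρX.prod ρX) := by
      have hbound : Integrable
          (fun z : X × X => C * (|(φ j) z.1| * |(ph : X → ℝ) z.2|)) (ρX.prod ρX) :=
        ((hint (φ j)).abs.mul_prod (hint ph).abs).const_mul C
      have hm : AEStronglyMeasurable
          (fun z : X × X => (φ j) z.1 * (K z.2 z.1 * ph z.2)) (ρX.prod ρX) := by
        refine (Lp.aestronglyMeasurable (φ j)).comp_fst.mul (AEStronglyMeasurable.mul ?_
          (Lp.aestronglyMeasurable ph).comp_snd)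
        exact (hKcont.comp (continuous_snd.prodMk continuous_fst)).aestronglyMeasurable
      apply hbound.mono' hm
      filter_upwards with z
      rw [Real.norm_eq_abs, abs_mul, abs_mul]
      have := mul_le_mul_of_nonneg_right (hC z.2 z.1) (abs_nonneg ((ph : X → ℝ) z.2))
      calc |(φ j) z.1| * (|K z.2 z.1| * |(ph : X → ℝ) z.2|)
          ≤ |(φ j) z.1| * (C * |(ph : X → ℝ) z.2|) :=
            mul_le_mul_of_nonneg_left this (abs_nonneg _)
        _ = C * (|(φ j) z.1| * |(ph : X → ℝ) z.2|) := by ring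
    have hswap := integral_integral_swap
      (f := fun x t => (φ j) x * (K t x * ph t)) hprod
    have hL : ∫ x, ∫ t, (φ j) x * (K t x * ph t) ∂ρX ∂ρX = ⟪φ j, gL⟫ := by
      rw [hinnerL2]
      apply integral_congr_ae
      filter_upwards [hgLae] with x hx
      rw [integral_const_mul, hx]
    have hR : ∫ t, ∫ x, (φ j) x * (K t x * ph t) ∂ρX ∂ρX = lam j ^ s * a j := by
      have hptwise : ∀ t, ∫ x, (φ j) x * (K t x * ph t) ∂ρX
          = ph t * ∫ x, K x t * (φ j) x ∂ρX := by
        intro t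
        rw [← integral_const_mul]
        apply integral_congr_ae
        filter_upwards with x
        rw [hKsymm x t]
        ring
      have heq2 : ∀ᵐ t ∂ρX, ∫ x, (φ j) x * (K t x * ph t) ∂ρX
          = ph t * (lam j * (φ j) t) := by
        filter_upwards [heig j] with t ht
        rw [hptwise t, ht]
      rw [integral_congr_ae heq2]
      have hco : ⟪ph, φ j⟫ = c j := by
        rw [real_inner_comm]
        exact aux_coeff φ hON c ph hsum_ph j
      have : ∫ t, (ph : X → ℝ) t * (lam j * (φ j) t) ∂ρX = lam j * ⟪ph, φ j⟫ := by
        rw [hinnerL2, ← integral_const_mul]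
        apply integral_congr_ae
        filter_upwards with t
        ring
      rw [this, hco, hcdef]
      have hls : lam j ^ s = lam j * lam j ^ (s - 1) := by
        have h' := Real.rpow_add (hpos j) 1 (s - 1)
        simp only [Real.rpow_one] at h'
        rw [show (1 + (s - 1)) = s by ring] at h'
        exact h'
      rw [hls]
      ring
    rw [← hL, hswap, hR]
  have hfj : ∀ j, ⟪φ j, fρ⟫ = lam j ^ s * a j :=
    fun j => aux_coeff φ hON _ fρ hfρ j
  have hfg : fρ = gL := by
    have hdiff : ∀ j, ⟪φ j, fρ - gL⟫ = 0 := by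
      intro j
      rw [inner_sub_right, hfj j, hinner j, sub_self]
    have hmem : fρ - gL ∈ (Submodule.span ℝ (Set.range φ))ᗮ := by
      rw [Submodule.mem_orthogonal]
      intro u hu
      induction hu using Submodule.span_induction with
      | mem u hu =>
        obtain ⟨j, rfl⟩ := hu
        exact hdiff j
      | zero => simp
      | add u v _ _ hu hv => rw [inner_add_left, hu, hv, add_zero]
      | smul r u _ hu => rw [inner_smul_left, hu, mul_zero]
    rw [Submodule.topologicalClosure_eq_top_iff] at hcomplete
    rw [hcomplete] at hmem
    have : fρ - gL = 0 := Submodule.mem_bot ℝ |>.mp hmem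
    rwa [sub_eq_zero] at this
  have hae3 : ∀ᵐ x ∂ρX, fρ x = ∫ t, K t x * ph t ∂ρX := by
    filter_upwards [hgLae] with x hx
    rw [hfg]
    exact hx
  have htv : tvNorm (ρX.withDensityᵥ ⇑ph) = ∫ x, |ph x| ∂ρX := aux_tv ρX _ (hint ph)
  have htv_le : tvNorm (ρX.withDensityᵥ ⇑ph) ≤ M * ‖h‖ := by
    rw [htv]
    have h1 : ∫ x, |(ph : X → ℝ) x| ∂ρX = (eLpNorm (⇑ph) 1 ρX).toReal := by
      rw [eLpNorm_one_eq_lintegral_enorm,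
        ← integral_norm_eq_lintegral_enorm (Lp.aestronglyMeasurable ph)]
      simp [Real.norm_eq_abs]
    have h2 : eLpNorm (⇑ph) 1 ρX ≤ eLpNorm (⇑ph) 2 ρX :=
      eLpNorm_le_eLpNorm_of_exponent_le one_le_two (Lp.aestronglyMeasurable ph)
    have h3 : (eLpNorm (⇑ph) 2 ρX).toReal = ‖ph‖ := (Lp.norm_def ph).symm
    calc ∫ x, |(ph : X → ℝ) x| ∂ρX = (eLpNorm (⇑ph) 1 ρX).toReal := h1
      _ ≤ (eLpNorm (⇑ph) 2 ρX).toReal := ENNReal.toReal_mono (Lp.eLpNorm_ne_top ph) h2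
      _ = ‖ph‖ := h3
      _ ≤ M * ‖h‖ := hnorm
  exact ⟨ph, hsum_ph, hnorm, hae3, htv, htv_le,
    fun lamreg hl => mul_le_mul_of_nonneg_left htv_le hl.le⟩
end

section
/- Assume 0 < s < 1 and all eigenvalues λ_j are positive with λ_j → 0. Then for every λ > 0 there exists φ ∈ L²_{ρ_X} (possibly φ = 0) such that, with g := L_K φ and μ := φ dρ_X ∈ M(X), one has ‖g − f_ρ‖²_{L²_{ρ_X}} + λ‖μ‖ ≤ (‖h‖_{L²_{ρ_X}} + ‖h‖²_{L²_{ρ_X}}) λ^{2s/(1+s)}. In particular, inf over μ ∈ M(X) of [‖f_μ − f_ρ‖²_{L²_{ρ_X}} + λ‖μ‖] is at most (‖h‖_{L²_{ρ_X}} + ‖h‖²_{L²_{ρ_X}}) λ^{2s/(1+s)}, where f_μ(x) := ∫_X K(t,x) dμ(t). -/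
open MeasureTheory
open scoped ENNReal NNReal


lemma parseval_aux {E : Type*} [NormedAddCommGroup E] [InnerProductSpace ℝ E]
    {φ : ℕ → E} (hON : Orthonormal ℝ φ) {c : ℕ → ℝ} {v : E}
    (hv : HasSum (fun j => c j • φ j) v) : HasSum (fun j => c j ^ 2) (‖v‖ ^ 2) := by
  have hcoef : ∀ k, (inner ℝ (φ k) v : ℝ) = c k := by
    intro k
    have h1 := hv.mapL (innerSL ℝ (φ k))
    have h2 : (fun j => (innerSL ℝ (φ k)) (c j • φ j)) =
        fun j => if j = k then c k else 0 := by
      funext j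
      simp only [innerSL_apply_apply, inner_smul_right]
      rcases eq_or_ne j k with rfl | hjk
      · simp [hON.1 j, real_inner_self_eq_norm_sq]
      · simp [hjk, hON.2 (Ne.symm hjk)]
    rw [h2] at h1
    exact (h1.unique (hasSum_ite_eq k (c k)))
  have h3 := hv.mapL (innerSL ℝ v)
  have h4 : (fun j => (innerSL ℝ v) (c j • φ j)) = fun j => c j ^ 2 := by
    funext j
    simp only [innerSL_apply_apply, inner_smul_right]
    rw [real_inner_comm, hcoef j]; ring
  rw [h4] at h3
  have h5 : (innerSL ℝ v) v = ‖v‖ ^ 2 := by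
    simp [innerSL_apply_apply, real_inner_self_eq_norm_sq]
  rwa [h5] at h3

lemma Lp_coeFn_sum_smul {α : Type*} [MeasurableSpace α] {μ : Measure α}
    (S : Finset ℕ) (c : ℕ → ℝ) (φ : ℕ → Lp ℝ 2 μ) :
    ⇑(∑ j ∈ S, c j • φ j) =ᵐ[μ] fun x => ∑ j ∈ S, c j * (φ j) x := by
  induction S using Finset.induction_on with
  | empty =>
      simp only [Finset.sum_empty]
      filter_upwards [Lp.coeFn_zero ℝ 2 μ] with x hx
      simpa using hx
  | @insert k S' hk ih =>
      simp only [Finset.sum_insert hk]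
      filter_upwards [Lp.coeFn_add (c k • φ k) (∑ j ∈ S', c j • φ j),
        Lp.coeFn_smul (c k) (φ k), ih] with x h1 h2 h3
      simp only [h1, Pi.add_apply, h2, Pi.smul_apply, smul_eq_mul, h3]

lemma tvNorm_withDensityᵥ {α : Type*} [MeasurableSpace α] (μ : Measure α) {f : α → ℝ}
    (hf : Integrable f μ) (hsm : StronglyMeasurable f) :
    tvNorm (μ.withDensityᵥ f) = ∫ x, |f x| ∂μ := by
  set P := μ.withDensity (fun x => ENNReal.ofReal (f x)) with hP
  set N := μ.withDensity (fun x => ENNReal.ofReal (-f x)) with hN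
  have hfm : Measurable f := hsm.measurable
  have hle1 : ∀ x, ENNReal.ofReal (f x) ≤ (‖f x‖₊ : ℝ≥0∞) := fun x => by
    rw [← ENNReal.ofReal_coe_nnreal, coe_nnnorm, Real.norm_eq_abs]
    exact ENNReal.ofReal_le_ofReal (le_abs_self _)
  have hle2 : ∀ x, ENNReal.ofReal (-f x) ≤ (‖f x‖₊ : ℝ≥0∞) := fun x => by
    rw [← ENNReal.ofReal_coe_nnreal, coe_nnnorm, Real.norm_eq_abs]
    exact ENNReal.ofReal_le_ofReal (neg_le_abs _)
  have hfin : (∫⁻ x, ‖f x‖₊ ∂μ) < ⊤ := hf.2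
  have hPfin : IsFiniteMeasure P :=
    isFiniteMeasure_withDensity ((lintegral_mono hle1).trans_lt hfin).ne
  have hNfin : IsFiniteMeasure N :=
    isFiniteMeasure_withDensity ((lintegral_mono hle2).trans_lt hfin).ne
  have hA : MeasurableSet {x | 0 ≤ f x} := measurableSet_le measurable_const hfm
  have hmut : P ⟂ₘ N := by
    refine ⟨{x | 0 ≤ f x}ᶜ, hA.compl, ?_, ?_⟩
    · rw [hP, withDensity_apply _ hA.compl]
      rw [setLIntegral_congr_fun_ae hA.compl
        (Filter.Eventually.of_forall (fun x hx => ?_)), lintegral_zero]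
      simp only [Set.mem_compl_iff, Set.mem_setOf_eq, not_le] at hx
      exact ENNReal.ofReal_eq_zero.mpr hx.le
    · rw [compl_compl, hN, withDensity_apply _ hA]
      rw [setLIntegral_congr_fun_ae hA
        (Filter.Eventually.of_forall (fun x hx => ?_)), lintegral_zero]
      simp only [Set.mem_setOf_eq] at hx
      exact ENNReal.ofReal_eq_zero.mpr (by linarith)
  haveI := hPfin; haveI := hNfin
  let j : JordanDecomposition α := ⟨P, N, hmut⟩
  have hjd : SignedMeasure.toJordanDecomposition (μ.withDensityᵥ f) = j := by
    apply MeasureTheory.SignedMeasure.toJordanDecomposition_eq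
    rw [MeasureTheory.withDensityᵥ_eq_withDensity_pos_part_sub_withDensity_neg_part hf]
    rfl
  have htv : SignedMeasure.totalVariation (μ.withDensityᵥ f) = P + N := by
    rw [MeasureTheory.SignedMeasure.totalVariation, hjd]
  rw [tvNorm, htv]
  have hPu : P Set.univ = ∫⁻ x, ENNReal.ofReal (f x) ∂μ := by
    rw [hP, withDensity_apply _ MeasurableSet.univ, Measure.restrict_univ]
  have hNu : N Set.univ = ∫⁻ x, ENNReal.ofReal (-f x) ∂μ := by
    rw [hN, withDensity_apply _ MeasurableSet.univ, Measure.restrict_univ]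
  have hsum : P Set.univ + N Set.univ = ∫⁻ x, ENNReal.ofReal (|f x|) ∂μ := by
    rw [hPu, hNu, ← lintegral_add_left (hfm.ennreal_ofReal)]
    congr 1; funext x
    rcases le_or_gt 0 (f x) with hx | hx
    · rw [abs_of_nonneg hx, ENNReal.ofReal_eq_zero.mpr (by linarith : -f x ≤ 0), add_zero]
    · rw [abs_of_neg hx, ENNReal.ofReal_eq_zero.mpr hx.le, zero_add]
  have habs : (∫⁻ x, ENNReal.ofReal (|f x|) ∂μ) = ENNReal.ofReal (∫ x, |f x| ∂μ) := by
    rw [← ofReal_integral_eq_lintegral_ofReal hf.abs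
      (Filter.Eventually.of_forall fun x => abs_nonneg _)]
  simp only [Measure.add_apply, hsum, habs]
  rw [ENNReal.toReal_ofReal (integral_nonneg fun x => abs_nonneg _)]


/-- assume `0 < s < 1` and all eigenvalues positive with `λ_j → 0`. Then for
every `λ > 0` there is `φ ∈ L²_{ρ_X}` such that, with `g = L_K φ` and `μ = φ dρ_X`,
`‖g − f_ρ‖² + λ‖μ‖ ≤ (‖h‖ + ‖h‖²) λ^{2s/(1+s)}`; in particular the infimum over `μ ∈ M(X)`
of `‖f_μ − f_ρ‖² + λ‖μ‖` is at most `(‖h‖ + ‖h‖²) λ^{2s/(1+s)}`.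
Here `(φⱼ)` is an orthonormal basis of `L²_{ρ_X}` of eigenfunctions of the integral
operator `L_K` of the continuous symmetric positive semidefinite kernel `K`, with
eigenvalues `λ₁ ≥ λ₂ ≥ … > 0`, `f_ρ = Σ_j λ_j^s a_j φ_j` and `h = Σ_j a_j φ_j`. -/
theorem stmt14 {X : Type*} [MetricSpace X] [CompactSpace X]
    [MeasurableSpace X] [BorelSpace X]
    (ρX : Measure X) [IsProbabilityMeasure ρX]
    (K : X → X → ℝ) (hKcont : Continuous fun p : X × X => K p.1 p.2)
    (hKsymm : ∀ x t, K x t = K t x)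
    (hKpsd : ∀ (n : ℕ) (z : Fin n → X) (c : Fin n → ℝ),
      0 ≤ ∑ i, ∑ j, c i * c j * K (z i) (z j))
    (φ : ℕ → Lp ℝ 2 ρX) (hON : Orthonormal ℝ φ)
    (hcomplete : (Submodule.span ℝ (Set.range φ)).topologicalClosure = ⊤)
    (lam : ℕ → ℝ) (hpos : ∀ j, 0 < lam j) (hdecr : ∀ j, lam (j + 1) ≤ lam j)
    (hlim : Filter.Tendsto lam Filter.atTop (nhds 0))
    (heig : ∀ j, ∀ᵐ x ∂ρX, (∫ t, K t x * (φ j) t ∂ρX) = lam j * (φ j) x)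
    (s : ℝ) (hs0 : 0 < s) (hs1 : s < 1)
    (a : ℕ → ℝ) (h : Lp ℝ 2 ρX) (hh : HasSum (fun j => a j • φ j) h)
    (fρ : Lp ℝ 2 ρX) (hfρ : HasSum (fun j => (lam j ^ s * a j) • φ j) fρ) :
    ∀ lamreg : ℝ, 0 < lamreg →
      ∃ ph g : Lp ℝ 2 ρX,
        (∀ᵐ x ∂ρX, g x = ∫ t, K t x * ph t ∂ρX) ∧
        ‖g - fρ‖ ^ 2 + lamreg * tvNorm (ρX.withDensityᵥ ph)
          ≤ (‖h‖ + ‖h‖ ^ 2) * lamreg ^ (2 * s / (1 + s)) := by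
  intro lamreg hlam
  have hs1' : (0:ℝ) < 1 + s := by linarith
  set u : ℝ := 1 / (1 + s) with hu
  set t : ℝ := lamreg ^ u with htdef
  have htpos : 0 < t := Real.rpow_pos_of_pos hlam u
  obtain ⟨Nn, hNn⟩ : ∃ N : ℕ, ∀ j ≥ N, lam j < t :=
    Filter.eventually_atTop.mp (hlim.eventually (eventually_lt_nhds htpos))
  set S : Finset ℕ := (Finset.range Nn).filter (fun j => t ≤ lam j) with hSdef
  have hSmem : ∀ j ∈ S, t ≤ lam j := fun j hj => (Finset.mem_filter.mp hj).2
  have hSnot : ∀ j, j ∉ S → lam j < t := by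
    intro j hj
    by_cases hjN : j < Nn
    · by_contra hc
      push_neg at hc
      exact hj (Finset.mem_filter.mpr ⟨Finset.mem_range.mpr hjN, hc⟩)
    · exact hNn j (le_of_not_gt hjN)
  set c : ℕ → ℝ := fun j => lam j ^ (s - 1) * a j with hc
  set b : ℕ → ℝ := fun j => lam j ^ s * a j with hb
  have hcb : ∀ j, c j * lam j = b j := by
    intro j
    have h1 : lam j ^ (s - 1) * lam j ^ (1:ℝ) = lam j ^ ((s-1)+1) :=
      (Real.rpow_add (hpos j) (s-1) 1).symm
    rw [Real.rpow_one] at h1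
    simp only [hc, hb]
    rw [mul_comm (lam j ^ (s-1)) (a j), mul_assoc, h1]
    ring_nf
  set ph : Lp ℝ 2 ρX := ∑ j ∈ S, c j • φ j with hphdef
  set g : Lp ℝ 2 ρX := ∑ j ∈ S, b j • φ j with hgdef
  refine ⟨ph, g, ?_, ?_⟩
  · -- a.e. identity
    obtain ⟨C, hC⟩ : ∃ C : ℝ, ∀ p : X × X, ‖K p.1 p.2‖ ≤ C := by
      obtain ⟨C, hC⟩ := isCompact_univ.exists_bound_of_continuousOn
        (hKcont.continuousOn (s := Set.univ))
      exact ⟨C, fun p => hC p trivial⟩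
    have hφint : ∀ j, Integrable (φ j) ρX :=
      fun j => (Lp.memLp (φ j)).integrable one_le_two
    have hKint : ∀ (x : X) (j : ℕ), Integrable (fun t => K t x * (φ j) t) ρX := by
      intro x j
      refine (hφint j).bdd_mul (c := C) ?_ (Filter.Eventually.of_forall fun t => hC (t, x))
      exact (hKcont.comp (continuous_id.prodMk continuous_const)).aestronglyMeasurable
    have hph_ae := Lp_coeFn_sum_smul S c φ
    have hg_ae := Lp_coeFn_sum_smul S b φ
    rw [← hphdef] at hph_ae
    rw [← hgdef] at hg_ae
    have heig_all : ∀ᵐ x ∂ρX, ∀ j, (∫ t, K t x * (φ j) t ∂ρX) = lam j * (φ j) x :=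
      (ae_all_iff).mpr heig
    filter_upwards [hg_ae, heig_all] with x hgx hx
    have hint_eq : ∫ t', K t' x * ph t' ∂ρX = ∑ j ∈ S, c j * (lam j * (φ j) x) := by
      have e1 : ∫ t', K t' x * ph t' ∂ρX
          = ∫ t', (∑ j ∈ S, c j * (K t' x * (φ j) t')) ∂ρX := by
        refine integral_congr_ae ?_
        filter_upwards [hph_ae] with t' ht'
        rw [ht', Finset.mul_sum]
        exact Finset.sum_congr rfl fun j _ => by ring
      rw [e1, integral_finset_sum S (fun j _ => ((hKint x j).const_mul (c j)))]
      exact Finset.sum_congr rfl fun j _ => by rw [MeasureTheory.integral_const_mul, hx j]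
    rw [hgx, hint_eq]
    refine Finset.sum_congr rfl fun j _ => ?_
    rw [← mul_assoc, mul_comm (c j) (lam j), mul_comm (lam j) (c j), hcb j]
  · -- the bound
    have hphs : HasSum (fun j => (if j ∈ S then c j else 0) • φ j) ph := by
      have h0 := hasSum_sum_of_ne_finset_zero
        (f := fun j => (if j ∈ S then c j else 0) • φ j) (s := S) (L := SummationFilter.unconditional ℕ)
        (fun j hj => by simp [hj])
      have he : ∑ j ∈ S, (if j ∈ S then c j else 0) • φ j = ph :=
        Finset.sum_congr rfl fun j hj => by rw [if_pos hj]
      exact he ▸ h0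
    have hgs : HasSum (fun j => (if j ∈ S then b j else 0) • φ j) g := by
      have h0 := hasSum_sum_of_ne_finset_zero
        (f := fun j => (if j ∈ S then b j else 0) • φ j) (s := S) (L := SummationFilter.unconditional ℕ)
        (fun j hj => by simp [hj])
      have he : ∑ j ∈ S, (if j ∈ S then b j else 0) • φ j = g :=
        Finset.sum_congr rfl fun j hj => by rw [if_pos hj]
      exact he ▸ h0
    have hds : HasSum (fun j => (if j ∈ S then 0 else b j) • φ j) (fρ - g) := by
      have h0 := hfρ.sub hgs
      have he : (fun j => (lam j ^ s * a j) • φ j - (if j ∈ S then b j else 0) • φ j)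
          = fun j => (if j ∈ S then 0 else b j) • φ j := by
        funext j
        by_cases hj : j ∈ S
        · simp [hj, hb]
        · simp [hj, hb]
      rwa [he] at h0
    have hpar_h := parseval_aux hON hh
    have hpar_ph := parseval_aux hON hphs
    have hpar_d := parseval_aux hON hds
    -- bound 1
    have hb1 : ‖fρ - g‖ ^ 2 ≤ (t ^ s) ^ 2 * ‖h‖ ^ 2 := by
      refine hasSum_le (fun j => ?_) hpar_d (hpar_h.mul_left ((t ^ s) ^ 2))
      by_cases hj : j ∈ S
      · simp only [if_pos hj]
        have h0 : (0:ℝ) ^ 2 = 0 := by norm_num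
        rw [h0]; positivity
      · simp only [if_neg hj, hb, mul_pow]
        refine mul_le_mul_of_nonneg_right ?_ (sq_nonneg _)
        refine pow_le_pow_left₀ (Real.rpow_nonneg (hpos j).le s) ?_ 2
        exact Real.rpow_le_rpow (hpos j).le (hSnot j hj).le hs0.le
    -- bound 2
    have hb2 : ‖ph‖ ^ 2 ≤ (t ^ (s-1)) ^ 2 * ‖h‖ ^ 2 := by
      refine hasSum_le (fun j => ?_) hpar_ph (hpar_h.mul_left ((t ^ (s-1)) ^ 2))
      by_cases hj : j ∈ S
      · simp only [if_pos hj, hc, mul_pow]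
        refine mul_le_mul_of_nonneg_right ?_ (sq_nonneg _)
        refine pow_le_pow_left₀ (Real.rpow_nonneg (hpos j).le _) ?_ 2
        exact Real.rpow_le_rpow_of_nonpos htpos (hSmem j hj) (by linarith)
      · simp only [if_neg hj]
        have h0 : (0:ℝ) ^ 2 = 0 := by norm_num
        rw [h0]; positivity
    have hphnorm : ‖ph‖ ≤ t ^ (s-1) * ‖h‖ := by
      have h2 : ‖ph‖ ^ 2 ≤ (t ^ (s-1) * ‖h‖) ^ 2 := by rw [mul_pow]; exact hb2
      have h3 := Real.sqrt_le_sqrt h2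
      rwa [Real.sqrt_sq (norm_nonneg _),
        Real.sqrt_sq (mul_nonneg (Real.rpow_nonneg htpos.le _) (norm_nonneg _))] at h3
    -- tvNorm bound
    have hphint : Integrable ph ρX := (Lp.memLp ph).integrable one_le_two
    have htvle : tvNorm (ρX.withDensityᵥ ⇑ph) ≤ ‖ph‖ := by
      rw [tvNorm_withDensityᵥ ρX hphint (Lp.stronglyMeasurable ph)]
      have e1 : ENNReal.ofReal (∫ x, |ph x| ∂ρX) = ∫⁻ x, ‖ph x‖ₑ ∂ρX := by
        simpa [Real.norm_eq_abs] using ofReal_integral_norm_eq_lintegral_enorm hphint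
      have e3 : eLpNorm (⇑ph) 1 ρX ≤ eLpNorm (⇑ph) 2 ρX :=
        eLpNorm_le_eLpNorm_of_exponent_le (by norm_num) (Lp.aestronglyMeasurable ph)
      have e4 : (∫ x, |ph x| ∂ρX) = (eLpNorm (⇑ph) 1 ρX).toReal := by
        rw [eLpNorm_one_eq_lintegral_enorm, ← e1,
          ENNReal.toReal_ofReal (integral_nonneg fun x => abs_nonneg _)]
      rw [e4, Lp.norm_def]
      exact ENNReal.toReal_mono (Lp.eLpNorm_ne_top ph) e3
    -- final arithmetic
    have key1 : (t ^ s) ^ 2 = lamreg ^ (2 * s / (1 + s)) := by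
      rw [htdef, ← Real.rpow_mul hlam.le, ← Real.rpow_natCast (lamreg ^ (u * s)) 2,
        ← Real.rpow_mul hlam.le]
      congr 1
      rw [hu]
      field_simp
      ring
    have key2 : lamreg * t ^ (s - 1) = lamreg ^ (2 * s / (1 + s)) := by
      have h1 : lamreg ^ (1:ℝ) * lamreg ^ (u * (s-1)) = lamreg ^ (1 + u * (s-1)) :=
        (Real.rpow_add hlam 1 _).symm
      rw [Real.rpow_one] at h1
      rw [htdef, ← Real.rpow_mul hlam.le, h1]
      congr 1
      rw [hu]
      field_simp
      ring
    have step1 : ‖g - fρ‖ ^ 2 + lamreg * tvNorm (ρX.withDensityᵥ ⇑ph)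
        ≤ (t ^ s) ^ 2 * ‖h‖ ^ 2 + lamreg * (t ^ (s-1) * ‖h‖) := by
      refine add_le_add ?_ ?_
      · rw [norm_sub_rev]; exact hb1
      · exact mul_le_mul_of_nonneg_left (htvle.trans hphnorm) hlam.le
    refine step1.trans ?_
    rw [key1, show lamreg * (t ^ (s-1) * ‖h‖) = (lamreg * t ^ (s-1)) * ‖h‖ from by ring,
      key2]
    exact le_of_eq (by ring)
end
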